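/- arXiv:1811.07196 — 2 statements merged into one kernel-verified Lean document; each statement's English description precedes it below -/
import Mathlib

section
/- For the skew shape λ/μ where λ is a partition of n and λ/μ is a horizontal strip, the statistic eig(λ/μ) = C(|λ|+1, 2) − C(|μ|+1, 2) + diag(λ/μ) is a nonnegative integer, where diag(λ/μ) is the sum over cells (i,j) of λ/μ of (j − i). -/
/-- The diagonal index of a set of cells `(i, j)` (0-indexed rows and
columns, so the cell in row `i`, column `j` has diagonal index `j - i`,
agreeing with the 1-indexed convention). -/
def diagS (s : Finset (ℕ × ℕ)) : ℤ := ∑ c ∈ s, ((c.2 : ℤ) - (c.1 : ℤ))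

/-- The skew diagram `λ/μ` is a horizontal strip: no two cells in the same column. -/
def IsHorizontalStrip (l m : YoungDiagram) : Prop :=
  ∀ c1 ∈ l.cells \ m.cells, ∀ c2 ∈ l.cells \ m.cells, c1.2 = c2.2 → c1 = c2

/-- The statistic `eig(λ/μ) = C(|λ|+1,2) − C(|μ|+1,2) + diag(λ/μ)`. -/
def eigS (l m : YoungDiagram) : ℤ :=
  ((l.card + 1).choose 2 : ℤ) - ((m.card + 1).choose 2 : ℤ) + diagS (l.cells \ m.cells)

/-- The one-row Young diagram with `n` boxes. -/
def rowDiagram (n : ℕ) : YoungDiagram :=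
  YoungDiagram.ofRowLens [n] (List.sortedGE_iff_pairwise.2 (List.pairwise_singleton _ n))

/-- The one-column Young diagram `1^n`. -/
def colDiagram (n : ℕ) : YoungDiagram :=
  YoungDiagram.ofRowLens (List.replicate n 1) (by
    induction n with
    | zero => exact List.sortedGE_iff_pairwise.2 List.Pairwise.nil
    | succ k ih =>
      rw [List.replicate_succ, List.sortedGE_iff_pairwise, List.pairwise_cons]
      exact ⟨fun b hb => by simp [List.eq_of_mem_replicate hb], ih.pairwise⟩)
/-- For a horizontal strip `λ/μ` with `λ` a partition of `n`, the statistic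
`eig(λ/μ)` is a nonnegative integer. -/
theorem eig_nonneg (n : ℕ) (l m : YoungDiagram) (hml : m ≤ l) (hn : l.card = n)
    (hs : IsHorizontalStrip l m) : 0 ≤ eigS l m := by
  clear hn
  suffices H : ∀ k (l : YoungDiagram), m ≤ l → IsHorizontalStrip l m →
      (l.cells \ m.cells).card = k → 0 ≤ eigS l m from H _ l hml hs rfl
  intro k
  induction k with
  | zero =>
    intro l hml hs hk
    have hempty : l.cells \ m.cells = ∅ := Finset.card_eq_zero.mp hk
    have hsub : l.cells ⊆ m.cells := by
      intro c hc
      by_contra h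
      exact absurd (Finset.mem_sdiff.mpr ⟨hc, h⟩) (by simp [hempty])
    have hcard : l.card = m.card :=
      le_antisymm (Finset.card_le_card hsub)
        (Finset.card_le_card (YoungDiagram.cells_subset_iff.mpr hml))
    simp [eigS, diagS, hempty, hcard]
  | succ k ih =>
    intro l hml hs hk
    have hne : (l.cells \ m.cells).Nonempty := by
      rw [← Finset.card_pos, hk]; omega
    obtain ⟨c, hc, hmax⟩ := Finset.exists_max_image (l.cells \ m.cells) Prod.snd hne
    obtain ⟨hcl, hcm⟩ := Finset.mem_sdiff.mp hc
    rw [YoungDiagram.mem_cells] at hcl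
    have hcl' : (c.1, c.2) ∈ l := by simpa using hcl
    -- the cell to the right is not in l
    have h1 : (c.1, c.2 + 1) ∉ l := by
      intro h
      by_cases hm : (c.1, c.2 + 1) ∈ m
      · exact hcm (YoungDiagram.mem_cells _ |>.mpr
          (by simpa using m.up_left_mem le_rfl (Nat.le_succ _) hm))
      · have hmem : (c.1, c.2 + 1) ∈ l.cells \ m.cells := by
          simp [Finset.mem_sdiff, YoungDiagram.mem_cells, h, hm]
        have := hmax _ hmem
        simp only at this; omega
    -- the cell below is not in l
    have h2 : (c.1 + 1, c.2) ∉ l := by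
      intro h
      by_cases hm : (c.1 + 1, c.2) ∈ m
      · exact hcm (YoungDiagram.mem_cells _ |>.mpr
          (by simpa using m.up_left_mem (Nat.le_succ _) le_rfl hm))
      · have hmem : (c.1 + 1, c.2) ∈ l.cells \ m.cells := by
          simp [Finset.mem_sdiff, YoungDiagram.mem_cells, h, hm]
        have heq := hs _ hmem _ hc rfl
        have : c.1 + 1 = c.1 := congrArg Prod.fst heq
        omega
    -- l with c removed is a Young diagram
    have hlow : IsLowerSet (↑(l.cells.erase c) : Set (ℕ × ℕ)) := by
      intro a b hba ha
      simp only [Finset.coe_erase, Set.mem_diff, Finset.mem_coe,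
        Set.mem_singleton_iff] at ha ⊢
      obtain ⟨hal, hac⟩ := ha
      rw [YoungDiagram.mem_cells] at hal
      have hbl : b ∈ l := l.isLowerSet hba hal
      refine ⟨(YoungDiagram.mem_cells _).mpr hbl, ?_⟩
      intro hbc
      rw [hbc] at hba
      obtain ⟨h1', h2'⟩ := hba
      rcases Nat.lt_or_ge c.1 a.1 with hlt | hge
      · exact h2 (l.up_left_mem hlt h2' (by simpa using hal))
      · have hx1 : c.1 = a.1 := le_antisymm h1' hge
        have hlt2 : c.2 < a.2 := by
          rcases Nat.lt_or_ge c.2 a.2 with h | h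
          · exact h
          · exact absurd (Prod.ext hx1 (le_antisymm h2' h)).symm hac
        exact h1 (l.up_left_mem (le_of_eq hx1) hlt2 (by simpa using hal))
    set l' : YoungDiagram := ⟨l.cells.erase c, hlow⟩ with hl'
    have hl'cells : l'.cells = l.cells.erase c := rfl
    have hml' : m ≤ l' := by
      rw [← YoungDiagram.cells_subset_iff, hl'cells]
      intro x hx
      refine Finset.mem_erase.mpr ⟨?_, YoungDiagram.cells_subset_iff.mpr hml hx⟩
      rintro rfl; exact hcm hx
    have hsdiff : l'.cells \ m.cells = (l.cells \ m.cells).erase c := by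
      ext x
      simp only [hl'cells, Finset.mem_sdiff, Finset.mem_erase]
      tauto
    have hs' : IsHorizontalStrip l' m := by
      intro c1 hc1 c2 hc2 hcol
      rw [hsdiff] at hc1 hc2
      exact hs _ (Finset.mem_of_mem_erase hc1) _ (Finset.mem_of_mem_erase hc2) hcol
    have hk' : (l'.cells \ m.cells).card = k := by
      rw [hsdiff, Finset.card_erase_of_mem hc, hk]
      omega
    have hIH := ih l' hml' hs' hk'
    have hcard : l.card = l'.card + 1 := by
      show l.cells.card = (l.cells.erase c).card + 1
      rw [Finset.card_erase_of_mem ((YoungDiagram.mem_cells _).mpr hcl)]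
      have : 1 ≤ l.cells.card := Finset.card_pos.mpr ⟨c, (YoungDiagram.mem_cells _).mpr hcl⟩
      omega
    -- column bound: c.1 + 1 ≤ l.card
    have hcol : c.1 + 1 ≤ l.card := by
      have hsub : (Finset.range (c.1 + 1)).image (fun i => (i, c.2)) ⊆ l.cells := by
        intro x hx
        simp only [Finset.mem_image, Finset.mem_range] at hx
        obtain ⟨i, hi, rfl⟩ := hx
        exact (YoungDiagram.mem_cells _).mpr (l.up_left_mem (by omega) le_rfl hcl')
      calc c.1 + 1 = ((Finset.range (c.1 + 1)).image (fun i => (i, c.2))).card := by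
            rw [Finset.card_image_of_injective _ (fun a b hab => by simpa using hab),
              Finset.card_range]
        _ ≤ l.card := Finset.card_le_card hsub
    have hdiag : diagS (l.cells \ m.cells)
        = ((c.2 : ℤ) - c.1) + diagS (l'.cells \ m.cells) := by
      rw [hsdiff]
      unfold diagS
      exact (Finset.add_sum_erase _ _ hc).symm
    have hch : ∀ N : ℕ, (N + 1).choose 2 = N.choose 2 + N := by
      intro N
      rw [Nat.choose_succ_succ N 1, Nat.choose_one_right, Nat.add_comm]
    have key : eigS l m = eigS l' m + ((l.card : ℤ) + ((c.2 : ℤ) - c.1)) := by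
      rw [eigS, eigS, hdiag, hcard]
      push_cast [hch]
      ring
    rw [key]
    have hb : (0 : ℤ) ≤ (l.card : ℤ) + ((c.2 : ℤ) - c.1) := by
      have : (c.1 : ℤ) + 1 ≤ l.card := by exact_mod_cast hcol
      omega
    omega
end

section
/- For every standard tableau t of type at least k ≥ 1, the eigenvalue v_k(t) defined recursively by v_0(t) = 1, v_k(t) = 0 if type(t) < k, and v_k(t) = v_k(Δ(t)) + (n + 1 − k + diag(t/Δ(t)))·v_{k−1}(Δ(t)) for t of size n and type ≥ k, is a positive integer. -/
namespace RSW

/-- A tableau given by its list of rows. -/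
abbrev Tab := List (List ℕ)

/-- Number of cells. -/
def sizeT (t : Tab) : ℕ := (t.map List.length).sum

/-- Shape of a tableau: list of row lengths. -/
def shapeT (t : Tab) : List ℕ := t.map List.length

/-- Standard Young tableau predicate for the list-of-rows model. -/
def IsSYT (t : Tab) : Prop :=
  (∀ r ∈ t, r ≠ []) ∧
  (t.map List.length).Pairwise (· ≥ ·) ∧
  (∀ r ∈ t, r.Pairwise (· < ·)) ∧
  (∀ i j, i + 1 < t.length → j < (t.getD (i+1) []).length →
      (t.getD i []).getD j 0 < (t.getD (i+1) []).getD j 0) ∧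
  t.flatten.Perm (List.range' 1 (sizeT t))

def getE (t : Tab) (i j : ℕ) : Option ℕ := (t[i]?).bind (fun r => r[j]?)

def setE (t : Tab) (i j v : ℕ) : Tab := t.set i ((t.getD i []).set j v)

/-- Jeu-de-taquin slide of the hole at `(i,j)` towards an outer corner. -/
def slide : ℕ → Tab → ℕ → ℕ → Tab × ℕ × ℕ
  | 0, t, i, j => (t, i, j)
  | fuel+1, t, i, j =>
    match getE t i (j+1), getE t (i+1) j with
    | none, none => (t, i, j)
    | some r, none => slide fuel (setE t i j r) i (j+1)
    | none, some d => slide fuel (setE t i j d) (i+1) j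
    | some r, some d =>
      if r < d then slide fuel (setE t i j r) i (j+1)
      else slide fuel (setE t i j d) (i+1) j

/-- Schützenberger's Δ operator: remove the entry 1, slide the hole to an
outer corner by jeu de taquin, remove it, and decrease all entries by 1. -/
def delta (t : Tab) : Tab :=
  let s := slide (sizeT t) t 0 0
  let t' := s.1.set s.2.1 ((s.1.getD s.2.1 []).take s.2.2)
  (t'.filter (fun r => !r.isEmpty)).map (fun r => r.map (fun v => v - 1))

/-- Index of the row containing the entry `v`. -/
def rowOf (t : Tab) (v : ℕ) : ℕ := t.findIdx (fun r => decide (v ∈ r))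

/-- The smallest ascent of a standard tableau: the least `i` such that
`i = n` or `i+1` lies in a row weakly above the row of `i`. -/
def firstAscent (t : Tab) : Option ℕ :=
  ((List.range (sizeT t)).map (· + 1)).find?
    (fun i => decide (i = sizeT t ∨ rowOf t (i+1) ≤ rowOf t i))

/-- A standard tableau is a desarrangement tableau if it is empty or its
smallest ascent is even. -/
def IsDes (t : Tab) : Prop :=
  t = [] ∨ ∃ k, firstAscent t = some k ∧ Even k

/-- The type of a standard tableau: the least `j` with `Δ^j t` a
desarrangement tableau. -/
noncomputable def typeT (t : Tab) : ℕ := sInf {j | IsDes (delta^[j] t)}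

/-- The diagonal index of (the shape of) a tableau. -/
def diagT (t : Tab) : ℤ :=
  ((List.range t.length).map (fun i =>
    ((List.range (t.getD i []).length).map (fun j => (j : ℤ) - i)).sum)).sum

/-- The diagonal index of the box `t/Δ(t)`. -/
def diagBox (t : Tab) : ℤ := diagT t - diagT (delta t)

open Classical in
noncomputable def vAux : ℕ → ℕ → Tab → ℤ
  | _, 0, _ => 1
  | 0, _+1, _ => 0
  | fuel+1, k+1, t =>
    if typeT t < k+1 then 0
    else vAux fuel (k+1) (delta t) +
      ((sizeT t : ℤ) + 1 - (k+1) + diagBox t) * vAux fuel k (delta t)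

/-- The eigenvalue `v_k(t)` of `ν_k` indexed by the standard tableau `t`. -/
noncomputable def v (k : ℕ) (t : Tab) : ℤ := vAux (sizeT t) k t

/-- Cells of (the shape of) a tableau, 0-indexed. -/
def cellsT (t : Tab) : Finset (ℕ × ℕ) :=
  (Finset.range t.length).biUnion
    (fun i => (Finset.range (t.getD i []).length).image (fun j => (i, j)))

end RSW

namespace RSW

/-- Row length. -/
def rlen (t : Tab) (i : ℕ) : ℕ := (t.getD i []).length

theorem getE_eq_some_iff {t : Tab} {i j v : ℕ} :
    getE t i j = some v ↔ ∃ row, t[i]? = some row ∧ row[j]? = some v := by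
  simp [getE, Option.bind_eq_some_iff]

theorem rlen_of_lt {t : Tab} {i : ℕ} (h : i < t.length) : rlen t i = t[i].length := by
  simp [rlen, List.getD_eq_getElem?_getD, List.getElem?_eq_getElem h]

theorem rlen_of_ge {t : Tab} {i : ℕ} (h : t.length ≤ i) : rlen t i = 0 := by
  simp [rlen, List.getD_eq_getElem?_getD, List.getElem?_eq_none h]

theorem getE_isSome_iff {t : Tab} {i j : ℕ} : (getE t i j).isSome ↔ j < rlen t i := by
  rcases lt_or_ge i t.length with h | h
  · simp only [getE, List.getElem?_eq_getElem h, Option.bind_some, rlen_of_lt h,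
      Option.isSome_iff_exists, List.getElem?_eq_some_iff]
    exact ⟨fun ⟨a, ha, _⟩ => ha, fun hj => ⟨t[i][j], hj, rfl⟩⟩
  · simp [getE, List.getElem?_eq_none h, rlen_of_ge h]

theorem getE_eq_none_iff {t : Tab} {i j : ℕ} : getE t i j = none ↔ rlen t i ≤ j := by
  rw [← Option.not_isSome_iff_eq_none, getE_isSome_iff]; omega

theorem exists_getE_of_lt {t : Tab} {i j : ℕ} (h : j < rlen t i) :
    ∃ v, getE t i j = some v := by
  have := getE_isSome_iff.2 h
  exact ⟨(getE t i j).get this, by simp⟩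

theorem lt_rlen_of_getE {t : Tab} {i j v : ℕ} (h : getE t i j = some v) : j < rlen t i :=
  getE_isSome_iff.1 (by simp [h])

theorem lt_length_of_getE {t : Tab} {i j v : ℕ} (h : getE t i j = some v) : i < t.length := by
  by_contra hc
  have := rlen_of_ge (t := t) (i := i) (by omega)
  have := lt_rlen_of_getE h
  omega

theorem getE_eq_getElem {t : Tab} {i j : ℕ} (hi : i < t.length) (hj : j < t[i].length) :
    getE t i j = some t[i][j] := by
  simp [getE, List.getElem?_eq_getElem, hi, hj]

theorem getE_eq_getD {t : Tab} {i j v : ℕ} (h : getE t i j = some v) :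
    (t.getD i []).getD j 0 = v := by
  rcases getE_eq_some_iff.1 h with ⟨row, hr, hv⟩
  have hi : i < t.length := lt_length_of_getE h
  have : t[i] = row := by simpa [List.getElem?_eq_getElem hi] using hr
  rcases List.getElem?_eq_some_iff.1 hv with ⟨hj, hv'⟩
  subst this
  simp [List.getD_eq_getElem?_getD, List.getElem?_eq_getElem, hi, hj, ← hv']

theorem getD_eq_getE {t : Tab} {i j : ℕ} (h : j < rlen t i) :
    getE t i j = some ((t.getD i []).getD j 0) := by
  rcases exists_getE_of_lt h with ⟨v, hv⟩
  rw [hv, getE_eq_getD hv]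

/-! setE -/

theorem shapeT_setE {t : Tab} {i j v : ℕ} : shapeT (setE t i j v) = shapeT t := by
  unfold shapeT setE
  rcases lt_or_ge i t.length with h | h
  · rw [List.map_set]
    have : ((t.getD i []).set j v).length = t[i].length := by
      simp [List.getD_eq_getElem?_getD, List.getElem?_eq_getElem h]
    rw [this]
    apply List.ext_getElem (by simp)
    intro n h1 h2
    rcases eq_or_ne n i with rfl | hne
    · simp [List.getElem_set, List.getElem_map]
    · simp [List.getElem_set, hne.symm]
  · rw [List.set_eq_of_length_le (by simpa using h)]

theorem getE_setE_self {t : Tab} {i j v : ℕ} (h : j < rlen t i) :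
    getE (setE t i j v) i j = some v := by
  have hi : i < t.length := by
    by_contra hc; have := rlen_of_ge (t := t) (i := i) (by omega); omega
  have hj : j < t[i].length := by rw [rlen_of_lt hi] at h; exact h
  unfold setE getE
  rw [List.getElem?_set_self' ]
  simp [List.getElem?_eq_getElem hi, List.getD_eq_getElem?_getD, List.getElem?_set_self', hj,
    List.getElem?_eq_getElem]

theorem getE_setE_ne {t : Tab} {i j v p q : ℕ} (h : ¬(p = i ∧ q = j)) :
    getE (setE t i j v) p q = getE t p q := by
  unfold setE getE
  rcases eq_or_ne p i with rfl | hne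
  · have hq : q ≠ j := fun hq => h ⟨rfl, hq⟩
    rcases lt_or_ge p t.length with hi | hi
    · rw [List.getElem?_set_self' ]
      simp [List.getElem?_eq_getElem hi, List.getD_eq_getElem?_getD, hi,
        List.getElem?_set_ne (Ne.symm hq)]
    · rw [List.set_eq_of_length_le (by simpa using hi)]
  · rw [List.getElem?_set_ne (Ne.symm hne)]

end RSW
namespace RSW

theorem sizeT_eq_flatten_length (t : Tab) : sizeT t = t.flatten.length := by
  simp [sizeT, List.length_flatten]

theorem sizeT_eq_shape_sum (t : Tab) : sizeT t = (shapeT t).sum := rfl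

theorem rlen_eq_shape (t : Tab) (i : ℕ) : rlen t i = (shapeT t).getD i 0 := by
  rcases lt_or_ge i t.length with h | h
  · simp [rlen_of_lt h, shapeT, List.getD_eq_getElem?_getD, List.getElem?_eq_getElem, h]
  · simp [rlen_of_ge h, shapeT, List.getD_eq_getElem?_getD, List.getElem?_eq_none, h]

theorem sizeT_congr {t s : Tab} (h : shapeT t = shapeT s) : sizeT t = sizeT s := by
  rw [sizeT_eq_shape_sum, sizeT_eq_shape_sum, h]

theorem rlen_congr {t s : Tab} (h : shapeT t = shapeT s) (i : ℕ) : rlen t i = rlen s i := by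
  rw [rlen_eq_shape, rlen_eq_shape, h]

theorem length_congr {t s : Tab} (h : shapeT t = shapeT s) : t.length = s.length := by
  have := congrArg List.length h
  simpa [shapeT] using this

theorem diagT_eq_shape (t : Tab) :
    diagT t = ((List.range t.length).map (fun i =>
      ((List.range (rlen t i)).map (fun j => (j : ℤ) - i)).sum)).sum := by
  simp [diagT, rlen]

theorem diagT_congr {t s : Tab} (h : shapeT t = shapeT s) : diagT t = diagT s := by
  rw [diagT_eq_shape, diagT_eq_shape, length_congr h]
  congr 1
  exact List.map_congr_left fun i _ => by rw [rlen_congr h]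

/-- The shape conditions of a standard tableau. -/
structure ShapeOK (t : Tab) : Prop where
  pos : ∀ r ∈ t, r ≠ []
  sorted : (t.map List.length).Pairwise (· ≥ ·)

theorem ShapeOK.congr {t s : Tab} (h : shapeT t = shapeT s) (S : ShapeOK t) : ShapeOK s := by
  have hs : s.map List.length = t.map List.length := h.symm
  constructor
  · intro r hr
    have : r.length ∈ s.map List.length := List.mem_map_of_mem (f := List.length) hr
    rw [hs] at this
    rcases List.mem_map.1 this with ⟨r', hr', hlen⟩
    have hp := S.pos r' hr'
    intro hc
    rw [hc] at hlen
    simp at hlen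
    exact hp hlen.symm.symm
  · rw [hs]; exact S.sorted

theorem ShapeOK.rlen_anti {t : Tab} (S : ShapeOK t) {p p' : ℕ} (h : p ≤ p') :
    rlen t p' ≤ rlen t p := by
  rcases eq_or_lt_of_le h with rfl | hlt
  · exact le_refl _
  rcases lt_or_ge p' t.length with h' | h'
  · have hp : p < t.length := lt_trans hlt h'
    have := List.pairwise_iff_getElem.1 S.sorted p p' (by simpa using hp) (by simpa using h') hlt
    simpa [rlen_of_lt hp, rlen_of_lt h'] using this
  · simp [rlen_of_ge h']

theorem ShapeOK.rlen_pos {t : Tab} (S : ShapeOK t) {p : ℕ} (h : p < t.length) :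
    0 < rlen t p := by
  have := S.pos t[p] (List.getElem_mem _)
  rw [rlen_of_lt h]
  exact List.length_pos_iff.2 this

theorem ShapeOK.size_lower {t : Tab} (S : ShapeOK t) {i j : ℕ} (h : j < rlen t i) :
    i + j < sizeT t := by
  induction t generalizing i with
  | nil => simp [rlen_of_ge (t := ([] : Tab)) (Nat.zero_le i)] at h
  | cons r tl ih =>
    have hpos : r ≠ [] := S.pos r (by simp)
    have S' : ShapeOK tl := ⟨fun x hx => S.pos x (by simp [hx]), (by
      have := S.sorted
      simp only [List.map_cons] at this
      exact this.of_cons)⟩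
    cases i with
    | zero =>
      have : rlen (r :: tl) 0 = r.length := by simp [rlen]
      rw [this] at h
      have : sizeT (r :: tl) = r.length + sizeT tl := by simp [sizeT]
      omega
    | succ i =>
      have hr : rlen (r :: tl) (i+1) = rlen tl i := by simp [rlen]
      rw [hr] at h
      have := ih S' h
      have hsz : sizeT (r :: tl) = r.length + sizeT tl := by simp [sizeT]
      have : 1 ≤ r.length := List.length_pos_iff.2 hpos
      omega

theorem length_le_sizeT {t : Tab} (S : ShapeOK t) : t.length ≤ sizeT t := by
  induction t with
  | nil => simp
  | cons r tl ih =>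
    have S' : ShapeOK tl := ⟨fun x hx => S.pos x (by simp [hx]), (by
      have := S.sorted
      simp only [List.map_cons] at this
      exact this.of_cons)⟩
    have h1 : 1 ≤ r.length := List.length_pos_iff.2 (S.pos r (by simp))
    have hsz : sizeT (r :: tl) = r.length + sizeT tl := by simp [sizeT]
    have := ih S'
    simp only [List.length_cons]
    omega

/-! flatten position lemmas -/

theorem flat_getE : ∀ (t : Tab) (i j : ℕ), j < rlen t i →
    getE t i j = t.flatten[sizeT (t.take i) + j]? := by
  intro t
  induction t with
  | nil => intro i j h; simp [rlen_of_ge (t := ([] : Tab)) (Nat.zero_le i)] at h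
  | cons r tl ih =>
    intro i j h
    cases i with
    | zero =>
      have hj : j < r.length := by simpa [rlen] using h
      simp [getE, sizeT, List.getElem?_append_left hj]
    | succ i =>
      have hj : j < rlen tl i := by simpa [rlen] using h
      have : sizeT ((r :: tl).take (i+1)) = r.length + sizeT (tl.take i) := by
        simp [sizeT]
      rw [this]
      have hge : r.length ≤ r.length + sizeT (tl.take i) + j := by omega
      rw [List.flatten_cons, List.getElem?_append_right hge]
      have : r.length + sizeT (tl.take i) + j - r.length = sizeT (tl.take i) + j := by omega
      rw [this, ← ih i j hj]
      simp [getE]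

theorem flat_setE : ∀ (t : Tab) (i j v : ℕ), j < rlen t i →
    (setE t i j v).flatten = t.flatten.set (sizeT (t.take i) + j) v := by
  intro t
  induction t with
  | nil => intro i j v h; simp [rlen_of_ge (t := ([] : Tab)) (Nat.zero_le i)] at h
  | cons r tl ih =>
    intro i j v h
    cases i with
    | zero =>
      have hj : j < r.length := by simpa [rlen] using h
      simp only [setE, List.getD_cons_zero, List.set_cons_zero, List.flatten_cons, sizeT,
        List.take_zero, List.map_nil, List.sum_nil, Nat.zero_add]
      rw [List.set_append_left _ _ (by simpa using hj)]
    | succ i =>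
      have hj : j < rlen tl i := by simpa [rlen] using h
      have hs : sizeT ((r :: tl).take (i+1)) = r.length + sizeT (tl.take i) := by simp [sizeT]
      simp only [setE, List.getD_cons_succ, List.set_cons_succ, List.flatten_cons, hs]
      rw [show r.length + sizeT (tl.take i) + j = r.length + (sizeT (tl.take i) + j) by omega,
        List.set_append_right _ _ (by omega)]
      have : r.length + (sizeT (tl.take i) + j) - r.length = sizeT (tl.take i) + j := by omega
      rw [this]
      have := ih i j v hj
      simp only [setE] at this
      rw [this]

/-! perm lemmas -/

theorem perm_cons_eraseIdx {l : List ℕ} {n : ℕ} {b : ℕ} (h : l[n]? = some b) :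
    l.Perm (b :: l.eraseIdx n) := by
  rcases List.getElem?_eq_some_iff.1 h with ⟨hn, hb⟩
  conv_lhs => rw [← List.take_append_drop n l, List.drop_eq_getElem_cons hn]
  rw [List.eraseIdx_eq_take_drop_succ]
  rw [hb]
  exact List.perm_middle

theorem set_perm_cons_eraseIdx {l : List ℕ} {n : ℕ} {a b : ℕ} (h : l[n]? = some b) :
    (l.set n a).Perm (a :: l.eraseIdx n) := by
  rcases List.getElem?_eq_some_iff.1 h with ⟨hn, hb⟩
  rw [List.set_eq_take_append_cons_drop, if_pos hn, List.eraseIdx_eq_take_drop_succ]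
  exact List.perm_middle

end RSW
namespace RSW

/-- Invariant for the jeu-de-taquin slide: `t` is standard away from the hole `(i,j)`. -/
structure Inv (L : List ℕ) (t : Tab) (i j : ℕ) : Prop where
  hole : j < rlen t i
  srow : ∀ p q v w, getE t p q = some v → getE t p (q+1) = some w →
    ¬(p = i ∧ q = j) → ¬(p = i ∧ q+1 = j) → v < w
  scol : ∀ p q v w, getE t p q = some v → getE t (p+1) q = some w →
    ¬(p = i ∧ q = j) → ¬(p+1 = i ∧ q = j) → v < w
  hnbr : ∀ p q v, getE t p q = some v → ((p = i ∧ q+1 = j) ∨ (p+1 = i ∧ q = j)) →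
    (∀ w, getE t i (j+1) = some w → v < w) ∧ (∀ w, getE t (i+1) j = some w → v < w)
  inj : ∀ p q p' q' v, getE t p q = some v → getE t p' q' = some v →
    ¬(p = i ∧ q = j) → ¬(p' = i ∧ q' = j) → p = p' ∧ q = q'
  vals : ∀ p q v, getE t p q = some v → 1 ≤ v
  perm : ∃ h, getE t i j = some h ∧ t.flatten.Perm (h :: L)

theorem inv_perm_step {L : List ℕ} {t : Tab} {i j p q x h : ℕ}
    (hole : j < rlen t i) (hh : getE t i j = some h) (hperm : t.flatten.Perm (h :: L))
    (hx : getE t p q = some x) (hne : ¬(p = i ∧ q = j)) :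
    (setE t i j x).flatten.Perm (x :: L) := by
  have hpos : t.flatten[sizeT (t.take i) + j]? = some h := by
    rw [← flat_getE t i j hole]; exact hh
  have h1 : (setE t i j x).flatten = t.flatten.set (sizeT (t.take i) + j) x :=
    flat_setE t i j x hole
  have h2 := set_perm_cons_eraseIdx (a := x) hpos
  have h3 := perm_cons_eraseIdx hpos
  have h4 : (h :: t.flatten.eraseIdx (sizeT (t.take i) + j)).Perm (h :: L) :=
    h3.symm.trans hperm
  have h5 := h4.cons_inv
  rw [h1]
  exact h2.trans (h5.cons x)

theorem inv_right {L : List ℕ} {t : Tab} {i j r : ℕ} (I : Inv L t i j)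
    (hr : getE t i (j+1) = some r) (hd : ∀ d, getE t (i+1) j = some d → r < d) :
    Inv L (setE t i j r) i (j+1) := by
  set u := setE t i j r with hu_def
  have hrl : ∀ p, rlen u p = rlen t p := rlen_congr shapeT_setE
  have hne : ∀ p q, ¬(p = i ∧ q = j) → getE u p q = getE t p q := fun p q h => getE_setE_ne h
  have huh : getE u i j = some r := getE_setE_self I.hole
  -- the two key bounds for the new hole
  have key1 : ∀ w, getE u i (j+1+1) = some w → r < w := by
    intro w hw
    rw [hne i (j+2) (by omega)] at hw
    exact I.srow i (j+1) r w hr hw (by omega) (by omega)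
  have key2 : ∀ w, getE u (i+1) (j+1) = some w → r < w := by
    intro w hw
    rw [hne (i+1) (j+1) (by omega)] at hw
    exact I.scol i (j+1) r w hr hw (by omega) (by omega)
  refine ⟨?_, ?_, ?_, ?_, ?_, ?_, ?_⟩
  · rw [hrl]; exact lt_rlen_of_getE hr
  · -- srow
    intro p q v w hv hw h1 h2
    by_cases hpq : p = i ∧ q = j
    · exact absurd ⟨hpq.1, by omega⟩ h2
    by_cases hpq' : p = i ∧ q + 1 = j
    · -- pair ((i,j-1),(i,j)) : w = r
      rw [hne p q (by omega)] at hv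
      have hwr : w = r := by
        rw [hpq'.1] at hw; rw [← hpq'.2] at huh
        rw [huh] at hw; exact (Option.some.inj hw).symm
      subst hwr
      exact (I.hnbr p q v hv (Or.inl hpq')).1 _ hr
    · rw [hne p q hpq, hne p (q+1) (by tauto)] at *
      exact I.srow p q v w hv hw hpq hpq'
  · -- scol
    intro p q v w hv hw h1 h2
    by_cases hpq : p = i ∧ q = j
    · -- v = r, w = t (i+1) j
      have hvr : v = r := by
        rw [hpq.1, hpq.2] at hv; rw [huh] at hv; exact (Option.some.inj hv).symm
      subst hvr
      rw [hne (p+1) q (by omega), hpq.1, hpq.2] at hw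
      exact hd w hw
    by_cases hpq2 : p + 1 = i ∧ q = j
    · -- pair ((i-1,j),(i,j)) : w = r
      rw [hne p q (by omega)] at hv
      have hwr : w = r := by
        rw [hpq2.1, hpq2.2] at hw; rw [huh] at hw; exact (Option.some.inj hw).symm
      subst hwr
      exact (I.hnbr p q v hv (Or.inr hpq2)).1 _ hr
    · rw [hne p q hpq, hne (p+1) q hpq2] at *
      exact I.scol p q v w hv hw hpq hpq2
  · -- hnbr
    intro p q v hv hcase
    rcases hcase with ⟨hp, hq⟩ | ⟨hp, hq⟩
    · -- left neighbour of new hole : (p,q) = (i,j), v = r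
      have : p = i ∧ q = j := ⟨hp, by omega⟩
      have hvr : v = r := by
        rw [this.1, this.2] at hv; rw [huh] at hv; exact (Option.some.inj hv).symm
      subst hvr
      exact ⟨key1, key2⟩
    · -- above neighbour : (p,q) = (i-1,j+1)
      rw [hne p q (by omega)] at hv
      have hvr : v < r := I.scol p q v r hv (by rw [hp, hq]; exact hr) (by omega) (by omega)
      exact ⟨fun w hw => lt_trans hvr (key1 w hw), fun w hw => lt_trans hvr (key2 w hw)⟩
  · -- inj
    intro p q p' q' v hv hv' h1 h2
    by_cases hpq : p = i ∧ q = j <;> by_cases hpq' : p' = i ∧ q' = j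
    · omega
    · have hvr : v = r := by
        rw [hpq.1, hpq.2] at hv; rw [huh] at hv; exact (Option.some.inj hv).symm
      subst hvr
      rw [hne p' q' hpq'] at hv'
      have := I.inj i (j+1) p' q' _ hr hv' (by omega) hpq'
      exact absurd ⟨this.1.symm, this.2.symm⟩ h2
    · have hvr : v = r := by
        rw [hpq'.1, hpq'.2] at hv'; rw [huh] at hv'; exact (Option.some.inj hv').symm
      subst hvr
      rw [hne p q hpq] at hv
      have := I.inj i (j+1) p q _ hr hv (by omega) hpq
      exact absurd ⟨this.1.symm, this.2.symm⟩ h1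
    · rw [hne p q hpq] at hv; rw [hne p' q' hpq'] at hv'
      exact I.inj p q p' q' v hv hv' hpq hpq'
  · -- vals
    intro p q v hv
    by_cases hpq : p = i ∧ q = j
    · have hvr : v = r := by
        rw [hpq.1, hpq.2] at hv; rw [huh] at hv; exact (Option.some.inj hv).symm
      subst hvr
      exact I.vals i (j+1) _ hr
    · rw [hne p q hpq] at hv; exact I.vals p q v hv
  · -- perm
    rcases I.perm with ⟨h, hh, hperm⟩
    refine ⟨r, ?_, ?_⟩
    · rw [hne i (j+1) (by omega)]; exact hr
    · exact inv_perm_step I.hole hh hperm hr (by omega)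

theorem inv_down {L : List ℕ} {t : Tab} {i j d : ℕ} (I : Inv L t i j)
    (hd : getE t (i+1) j = some d) (hr : ∀ r, getE t i (j+1) = some r → d < r) :
    Inv L (setE t i j d) (i+1) j := by
  set u := setE t i j d with hu_def
  have hrl : ∀ p, rlen u p = rlen t p := rlen_congr shapeT_setE
  have hne : ∀ p q, ¬(p = i ∧ q = j) → getE u p q = getE t p q := fun p q h => getE_setE_ne h
  have huh : getE u i j = some d := getE_setE_self I.hole
  have key1 : ∀ w, getE u (i+1) (j+1) = some w → d < w := by
    intro w hw
    rw [hne (i+1) (j+1) (by omega)] at hw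
    exact I.srow (i+1) j d w hd hw (by omega) (by omega)
  have key2 : ∀ w, getE u (i+1+1) j = some w → d < w := by
    intro w hw
    rw [hne (i+2) j (by omega)] at hw
    exact I.scol (i+1) j d w hd hw (by omega) (by omega)
  refine ⟨?_, ?_, ?_, ?_, ?_, ?_, ?_⟩
  · rw [hrl]; exact lt_rlen_of_getE hd
  · -- srow
    intro p q v w hv hw h1 h2
    by_cases hpq : p = i ∧ q = j
    · -- v = d, w = t i (j+1)
      have hvd : v = d := by
        rw [hpq.1, hpq.2] at hv; rw [huh] at hv; exact (Option.some.inj hv).symm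
      subst hvd
      rw [hne p (q+1) (by omega), hpq.1, hpq.2] at hw
      exact hr w hw
    by_cases hpq' : p = i ∧ q + 1 = j
    · rw [hne p q (by omega)] at hv
      have hwd : w = d := by
        rw [hpq'.1] at hw; rw [← hpq'.2] at huh
        rw [huh] at hw; exact (Option.some.inj hw).symm
      subst hwd
      exact (I.hnbr p q v hv (Or.inl hpq')).2 _ hd
    · rw [hne p q hpq, hne p (q+1) hpq'] at *
      exact I.srow p q v w hv hw hpq hpq'
  · -- scol
    intro p q v w hv hw h1 h2
    by_cases hpq : p = i ∧ q = j
    · exact absurd ⟨by omega, hpq.2⟩ h2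
    by_cases hpq2 : p + 1 = i ∧ q = j
    · rw [hne p q (by omega)] at hv
      have hwd : w = d := by
        rw [hpq2.1, hpq2.2] at hw; rw [huh] at hw; exact (Option.some.inj hw).symm
      subst hwd
      exact (I.hnbr p q v hv (Or.inr hpq2)).2 _ hd
    · rw [hne p q hpq, hne (p+1) q hpq2] at *
      exact I.scol p q v w hv hw hpq hpq2
  · -- hnbr
    intro p q v hv hcase
    rcases hcase with ⟨hp, hq⟩ | ⟨hp, hq⟩
    · -- left neighbour of new hole (i+1,j) : (p,q) = (i+1,j-1)
      rw [hne p q (by omega)] at hv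
      have hvd : v < d := I.srow p q v d hv (by rw [hp, hq]; exact hd) (by omega) (by omega)
      exact ⟨fun w hw => lt_trans hvd (key1 w hw), fun w hw => lt_trans hvd (key2 w hw)⟩
    · -- above neighbour : (p,q) = (i,j), v = d
      have : p = i ∧ q = j := ⟨by omega, hq⟩
      have hvd : v = d := by
        rw [this.1, this.2] at hv; rw [huh] at hv; exact (Option.some.inj hv).symm
      subst hvd
      exact ⟨key1, key2⟩
  · -- inj
    intro p q p' q' v hv hv' h1 h2
    by_cases hpq : p = i ∧ q = j <;> by_cases hpq' : p' = i ∧ q' = j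
    · omega
    · have hvd : v = d := by
        rw [hpq.1, hpq.2] at hv; rw [huh] at hv; exact (Option.some.inj hv).symm
      subst hvd
      rw [hne p' q' hpq'] at hv'
      have := I.inj (i+1) j p' q' _ hd hv' (by omega) hpq'
      exact absurd ⟨this.1.symm, this.2.symm⟩ h2
    · have hvd : v = d := by
        rw [hpq'.1, hpq'.2] at hv'; rw [huh] at hv'; exact (Option.some.inj hv').symm
      subst hvd
      rw [hne p q hpq] at hv
      have := I.inj (i+1) j p q _ hd hv (by omega) hpq
      exact absurd ⟨this.1.symm, this.2.symm⟩ h1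
    · rw [hne p q hpq] at hv; rw [hne p' q' hpq'] at hv'
      exact I.inj p q p' q' v hv hv' hpq hpq'
  · -- vals
    intro p q v hv
    by_cases hpq : p = i ∧ q = j
    · have hvd : v = d := by
        rw [hpq.1, hpq.2] at hv; rw [huh] at hv; exact (Option.some.inj hv).symm
      subst hvd
      exact I.vals (i+1) j _ hd
    · rw [hne p q hpq] at hv; exact I.vals p q v hv
  · -- perm
    rcases I.perm with ⟨h, hh, hperm⟩
    refine ⟨d, ?_, ?_⟩
    · rw [hne (i+1) j (by omega)]; exact hd
    · exact inv_perm_step I.hole hh hperm hd (by omega)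

theorem slide_spec : ∀ (fuel : ℕ) (L : List ℕ) (t : Tab) (i j : ℕ), Inv L t i j → ShapeOK t →
    shapeT (slide fuel t i j).1 = shapeT t ∧
    Inv L (slide fuel t i j).1 (slide fuel t i j).2.1 (slide fuel t i j).2.2 ∧
    i ≤ (slide fuel t i j).2.1 ∧ j ≤ (slide fuel t i j).2.2 ∧
    (sizeT t ≤ fuel + i + j →
      getE (slide fuel t i j).1 (slide fuel t i j).2.1 ((slide fuel t i j).2.2+1) = none ∧
      getE (slide fuel t i j).1 ((slide fuel t i j).2.1+1) (slide fuel t i j).2.2 = none) := by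
  intro fuel
  induction fuel with
  | zero =>
    intro L t i j I S
    refine ⟨rfl, I, le_refl _, le_refl _, ?_⟩
    intro hsz
    have := S.size_lower I.hole
    omega
  | succ fuel ih =>
    intro L t i j I S
    rcases hR : getE t i (j+1) with _ | r <;> rcases hD : getE t (i+1) j with _ | d
    · -- both none: terminal
      have hs : slide (fuel+1) t i j = (t, i, j) := by
        simp [slide, hR, hD]
      rw [hs]
      exact ⟨rfl, I, le_refl _, le_refl _, fun _ => ⟨hR, hD⟩⟩
    · -- right none, below some: move down
      have hs : slide (fuel+1) t i j = slide fuel (setE t i j d) (i+1) j := by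
        simp [slide, hR, hD]
      have I' : Inv L (setE t i j d) (i+1) j :=
        inv_down I hD (fun r hr => by rw [hR] at hr; cases hr)
      have Sh : shapeT (setE t i j d) = shapeT t := shapeT_setE
      have S' : ShapeOK (setE t i j d) := S.congr Sh.symm
      obtain ⟨e1, e2, e3, e4, e5⟩ := ih L (setE t i j d) (i+1) j I' S'
      rw [hs]
      refine ⟨e1.trans Sh, e2, by omega, e4, ?_⟩
      intro hsz
      exact e5 (by rw [sizeT_congr Sh]; omega)
    · -- right some, below none: move right
      have hs : slide (fuel+1) t i j = slide fuel (setE t i j r) i (j+1) := by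
        simp [slide, hR, hD]
      have I' : Inv L (setE t i j r) i (j+1) :=
        inv_right I hR (fun d hd => by rw [hD] at hd; cases hd)
      have Sh : shapeT (setE t i j r) = shapeT t := shapeT_setE
      have S' : ShapeOK (setE t i j r) := S.congr Sh.symm
      obtain ⟨e1, e2, e3, e4, e5⟩ := ih L (setE t i j r) i (j+1) I' S'
      rw [hs]
      refine ⟨e1.trans Sh, e2, e3, by omega, ?_⟩
      intro hsz
      exact e5 (by rw [sizeT_congr Sh]; omega)
    · -- both some
      by_cases hc : r < d
      · have hs : slide (fuel+1) t i j = slide fuel (setE t i j r) i (j+1) := by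
          simp [slide, hR, hD, hc]
        have I' : Inv L (setE t i j r) i (j+1) :=
          inv_right I hR (fun d' hd' => by rw [hD] at hd'; cases hd'; exact hc)
        have Sh : shapeT (setE t i j r) = shapeT t := shapeT_setE
        have S' : ShapeOK (setE t i j r) := S.congr Sh.symm
        obtain ⟨e1, e2, e3, e4, e5⟩ := ih L (setE t i j r) i (j+1) I' S'
        rw [hs]
        refine ⟨e1.trans Sh, e2, e3, by omega, ?_⟩
        intro hsz
        exact e5 (by rw [sizeT_congr Sh]; omega)
      · have hs : slide (fuel+1) t i j = slide fuel (setE t i j d) (i+1) j := by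
          simp [slide, hR, hD, hc]
        have hdr : d < r := by
          have hne : d ≠ r := by
            intro he
            have := I.inj i (j+1) (i+1) j r hR (by rw [he] at hD; exact hD)
              (by omega) (by omega)
            omega
          omega
        have I' : Inv L (setE t i j d) (i+1) j :=
          inv_down I hD (fun r' hr' => by rw [hR] at hr'; cases hr'; exact hdr)
        have Sh : shapeT (setE t i j d) = shapeT t := shapeT_setE
        have S' : ShapeOK (setE t i j d) := S.congr Sh.symm
        obtain ⟨e1, e2, e3, e4, e5⟩ := ih L (setE t i j d) (i+1) j I' S'
        rw [hs]
        refine ⟨e1.trans Sh, e2, by omega, e4, ?_⟩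
        intro hsz
        exact e5 (by rw [sizeT_congr Sh]; omega)

end RSW
namespace RSW

theorem syt_shapeOK {t : Tab} (ht : IsSYT t) : ShapeOK t := ⟨ht.1, ht.2.1⟩

theorem syt_perm {t : Tab} (ht : IsSYT t) : t.flatten.Perm (List.range' 1 (sizeT t)) :=
  ht.2.2.2.2

theorem syt_nodup {t : Tab} (ht : IsSYT t) : t.flatten.Nodup :=
  (syt_perm ht).nodup_iff.2 (List.nodup_range' 1)

theorem getE_mem_flatten {t : Tab} {p q v : ℕ} (h : getE t p q = some v) : v ∈ t.flatten := by
  have h1 := flat_getE t p q (lt_rlen_of_getE h)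
  rw [h] at h1
  exact List.mem_of_getElem? h1.symm

theorem mem_flatten_getE {t : Tab} {v : ℕ} (h : v ∈ t.flatten) : ∃ p q, getE t p q = some v := by
  rcases List.mem_flatten.1 h with ⟨row, hrow, hv⟩
  rcases List.mem_iff_getElem.1 hrow with ⟨p, hp, hrow'⟩
  rcases List.mem_iff_getElem.1 hv with ⟨q, hq, hv'⟩
  exact ⟨p, q, by subst hrow'; rw [getE_eq_getElem hp hq, hv']⟩

theorem syt_vals {t : Tab} (ht : IsSYT t) {p q v : ℕ} (h : getE t p q = some v) :
    1 ≤ v ∧ v < 1 + sizeT t := by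
  have := (syt_perm ht).mem_iff.1 (getE_mem_flatten h)
  rw [List.mem_range'] at this
  omega

theorem syt_srow {t : Tab} (ht : IsSYT t) {p q v w : ℕ}
    (hv : getE t p q = some v) (hw : getE t p (q+1) = some w) : v < w := by
  have hp : p < t.length := lt_length_of_getE hv
  have hq : q + 1 < t[p].length := by
    have := lt_rlen_of_getE hw; rwa [rlen_of_lt hp] at this
  have hsorted := ht.2.2.1 t[p] (List.getElem_mem hp)
  have := (List.pairwise_iff_getElem.1 hsorted) q (q+1) (by omega) hq (by omega)
  rw [getE_eq_getElem hp (by omega)] at hv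
  rw [getE_eq_getElem hp hq] at hw
  cases hv; cases hw; exact this

theorem syt_scol {t : Tab} (ht : IsSYT t) {p q v w : ℕ}
    (hv : getE t p q = some v) (hw : getE t (p+1) q = some w) : v < w := by
  have hp1 : p + 1 < t.length := lt_length_of_getE hw
  have hq : q < (t.getD (p+1) []).length := lt_rlen_of_getE hw
  have := ht.2.2.2.1 p q hp1 hq
  rw [getE_eq_getD hv, getE_eq_getD hw] at this
  exact this

theorem syt_inj {t : Tab} (ht : IsSYT t) {p q p' q' v : ℕ}
    (hv : getE t p q = some v) (hv' : getE t p' q' = some v) : p = p' ∧ q = q' := by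
  have hnd := syt_nodup ht
  rw [List.nodup_flatten] at hnd
  have hp : p < t.length := lt_length_of_getE hv
  have hp' : p' < t.length := lt_length_of_getE hv'
  have hq : q < t[p].length := by have := lt_rlen_of_getE hv; rwa [rlen_of_lt hp] at this
  have hq' : q' < t[p'].length := by have := lt_rlen_of_getE hv'; rwa [rlen_of_lt hp'] at this
  rw [getE_eq_getElem hp hq] at hv
  rw [getE_eq_getElem hp' hq'] at hv'
  cases hv
  have hvmem : t[p][q] ∈ t[p'] := by rw [← Option.some.inj hv']; exact List.getElem_mem hq'
  rcases Nat.lt_trichotomy p p' with hlt | heq | hgt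
  · have hdisj := (List.pairwise_iff_getElem.1 hnd.2) p p' hp hp' hlt
    exact absurd (hdisj (List.getElem_mem hq) hvmem) (by simp)
  · subst heq
    have hrownd := hnd.1 t[p] (List.getElem_mem hp)
    constructor
    · rfl
    · by_contra hne
      have := List.pairwise_iff_getElem.1 hrownd
      rcases Nat.lt_or_ge q q' with h | h
      · exact (this q q' hq hq' h) (Option.some.inj hv').symm
      · exact (this q' q hq' hq (by omega)) (Option.some.inj hv')
  · have hdisj := (List.pairwise_iff_getElem.1 hnd.2) p' p hp' hp hgt
    exact absurd (hdisj hvmem (List.getElem_mem hq)) (by simp)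

theorem sizeT_cons (row : List ℕ) (tl : Tab) : sizeT (row :: tl) = row.length + sizeT tl := by
  simp [sizeT]

theorem syt_size_pos {t : Tab} (ht : IsSYT t) (hne : t ≠ []) : 1 ≤ sizeT t := by
  rcases t with _ | ⟨row, tl⟩
  · exact absurd rfl hne
  · have := ht.1 row (by simp)
    have h1 : 1 ≤ row.length := List.length_pos_iff.2 this
    rw [sizeT_cons]
    omega

theorem syt_corner {t : Tab} (ht : IsSYT t) (hne : t ≠ []) : getE t 0 0 = some 1 := by
  have hsz := syt_size_pos ht hne
  have h1mem : (1 : ℕ) ∈ t.flatten := by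
    rw [(syt_perm ht).mem_iff, List.mem_range']
    exact ⟨0, by omega, by omega⟩
  rcases mem_flatten_getE h1mem with ⟨p, q, hpq⟩
  have hq0 : q = 0 := by
    by_contra hq
    rcases exists_getE_of_lt (show q - 1 < rlen t p by have := lt_rlen_of_getE hpq; omega)
      with ⟨x, hx⟩
    have : x < 1 := by
      have := syt_srow ht hx (show getE t p (q-1+1) = some 1 by rwa [Nat.sub_add_cancel]; omega)
      exact this
    have := (syt_vals ht hx).1
    omega
  subst hq0
  have hp0 : p = 0 := by
    by_contra hp
    have hplen : p - 1 < t.length := by have := lt_length_of_getE hpq; omega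
    rcases exists_getE_of_lt (show 0 < rlen t (p-1) from (syt_shapeOK ht).rlen_pos hplen)
      with ⟨x, hx⟩
    have : x < 1 := by
      have := syt_scol ht hx (show getE t (p-1+1) 0 = some 1 by rwa [Nat.sub_add_cancel]; omega)
      exact this
    have := (syt_vals ht hx).1
    omega
  subst hp0
  exact hpq

/-- The initial invariant for the slide in `delta`. -/
theorem init_inv {t : Tab} (ht : IsSYT t) (hne : t ≠ []) :
    Inv (List.range' 2 (sizeT t - 1)) t 0 0 := by
  refine ⟨?_, ?_, ?_, ?_, ?_, ?_, ?_⟩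
  · have := lt_rlen_of_getE (syt_corner ht hne); omega
  · intro p q v w hv hw _ _; exact syt_srow ht hv hw
  · intro p q v w hv hw _ _; exact syt_scol ht hv hw
  · intro p q v hv hcase; omega
  · intro p q p' q' v hv hv' _ _; exact syt_inj ht hv hv'
  · intro p q v hv; exact (syt_vals ht hv).1
  · refine ⟨1, syt_corner ht hne, ?_⟩
    have hsz := syt_size_pos ht hne
    have : List.range' 1 (sizeT t) = 1 :: List.range' 2 (sizeT t - 1) := by
      conv_lhs => rw [show sizeT t = (sizeT t - 1) + 1 by omega]
      rw [List.range'_succ]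
    rw [← this]
    exact syt_perm ht

/-! misc helpers -/

theorem range'_map_sub : ∀ (m a : ℕ), (List.range' (a+1) m).map (· - 1) = List.range' a m := by
  intro m
  induction m with
  | zero => intro a; simp
  | succ m ih =>
    intro a
    rw [List.range'_succ, List.range'_succ, List.map_cons, ih (a+1)]
    simp

theorem flatten_filter_nonempty : ∀ (x : Tab),
    (x.filter (fun row => !row.isEmpty)).flatten = x.flatten := by
  intro x
  induction x with
  | nil => rfl
  | cons row tl ih =>
    by_cases h : row.isEmpty
    · have : row = [] := List.isEmpty_iff.1 h
      subst this
      simpa using ih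
    · simp only [List.filter_cons, h]
      simpa using congrArg (row ++ ·) ih

theorem sum_list_range (f : ℕ → ℤ) : ∀ M, ((List.range M).map f).sum = ∑ i ∈ Finset.range M, f i := by
  intro M
  induction M with
  | zero => simp
  | succ M ih => rw [List.range_succ, Finset.sum_range_succ, List.map_append, List.sum_append, ih]; simp

theorem sorted_lt_of_adj {l : List ℕ} (h : ∀ (q : ℕ), q + 1 < l.length →
    ∀ (h1 : q < l.length) (h2 : q+1 < l.length), l[q] < l[q+1]) : l.Pairwise (· < ·) := by
  rw [← List.isChain_iff_pairwise, List.isChain_iff_getElem]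
  intro i hi
  have := h i (by omega) (by omega) (by omega)
  simpa [List.get_eq_getElem] using this

theorem flat_shrink : ∀ (t : Tab) (r c : ℕ), rlen t r = c + 1 →
    (t.set r ((t.getD r []).take c)).flatten = t.flatten.eraseIdx (sizeT (t.take r) + c) := by
  intro t
  induction t with
  | nil => intro r c h; rw [rlen_of_ge (by simp)] at h; omega
  | cons row tl ih =>
    intro r c h
    cases r with
    | zero =>
      have hlen : row.length = c + 1 := by simpa [rlen] using h
      simp only [List.set_cons_zero, List.getD_cons_zero, List.flatten_cons, sizeT,
        List.take_zero, List.map_nil, List.sum_nil, Nat.zero_add]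
      rw [List.eraseIdx_eq_take_drop_succ, List.take_append_of_le_length (by omega),
        List.drop_append_of_le_length (by omega)]
      rw [List.drop_of_length_le (by omega)]
      simp
    | succ r =>
      have h' : rlen tl r = c + 1 := by simpa [rlen] using h
      have hs : sizeT ((row :: tl).take (r+1)) = row.length + sizeT (tl.take r) := by
        simp [sizeT]
      simp only [List.set_cons_succ, List.getD_cons_succ, List.flatten_cons, hs]
      rw [ih r c h']
      rw [show row.length + sizeT (List.take r tl) + c = row.length + (sizeT (List.take r tl) + c) by omega,
        List.eraseIdx_append_of_length_le (by omega)]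
      have he : row.length + (sizeT (List.take r tl) + c) - row.length = sizeT (List.take r tl) + c := by
        omega
      rw [he]

end RSW
namespace RSW

theorem rlen_eq_getElem? (t : Tab) (i : ℕ) : rlen t i = (t[i]?.getD []).length := by
  rw [rlen, List.getD_eq_getElem?_getD]

theorem getE_map (x : Tab) (f : ℕ → ℕ) (p q : ℕ) :
    getE (x.map (List.map f)) p q = (getE x p q).map f := by
  unfold getE
  rw [List.getElem?_map]
  cases h : x[p]? <;> simp [List.getElem?_map]

theorem rlen_map (x : Tab) (f : ℕ → ℕ) (p : ℕ) :
    rlen (x.map (List.map f)) p = rlen x p := by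
  rw [rlen_eq_getElem?, rlen_eq_getElem?, List.getElem?_map]
  cases h : x[p]? <;> simp

theorem flatten_map_map (x : Tab) (f : ℕ → ℕ) :
    (x.map (List.map f)).flatten = x.flatten.map f := by
  induction x with
  | nil => rfl
  | cons row tl ih =>
    simp only [List.map_cons, List.flatten_cons, List.map_append, ih]

theorem row_sum_eq (m i : ℕ) :
    ((List.range m).map (fun j => (j : ℤ) - i)).sum = ∑ j ∈ Finset.range m, ((j : ℤ) - i) := by
  induction m with
  | zero => simp
  | succ m ih => rw [List.range_succ, Finset.sum_range_succ, ← ih]; simp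

theorem diagT_finset (x : Tab) :
    diagT x = ∑ i ∈ Finset.range x.length, ∑ j ∈ Finset.range (rlen x i), ((j:ℤ) - i) := by
  rw [diagT_eq_shape, sum_list_range]
  exact Finset.sum_congr rfl (fun i _ => row_sum_eq _ _)

theorem delta_master {t t' : Tab} {r c : ℕ} (ht : IsSYT t) (hne : t ≠ [])
    (hs : slide (sizeT t) t 0 0 = (t', r, c)) :
    IsSYT (delta t) ∧ sizeT (delta t) = sizeT t - 1 ∧
    diagT t - diagT (delta t) = (c : ℤ) - (r : ℤ) ∧
    r < t.length ∧ rlen t r = c + 1 ∧ rlen t (r+1) ≤ c ∧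
    (∀ p q, getE (delta t) p q = if p = r ∧ c ≤ q then none else (getE t' p q).map (· - 1)) ∧
    (delta t).length = (if c = 0 then t.length - 1 else t.length) := by
  have hn1 : 1 ≤ sizeT t := syt_size_pos ht hne
  obtain ⟨e1, e2, e3, e4, e5⟩ := slide_spec (sizeT t) (List.range' 2 (sizeT t - 1)) t 0 0
    (init_inv ht hne) (syt_shapeOK ht)
  rw [hs] at e1 e2 e3 e4 e5
  simp only at e1 e2 e3 e4 e5
  obtain ⟨hterm1, hterm2⟩ := e5 (by omega)
  have S' : ShapeOK t' := (syt_shapeOK ht).congr e1.symm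
  have hole : c < rlen t' r := e2.hole
  have hb' : rlen t' (r+1) ≤ c := getE_eq_none_iff.1 hterm2
  have hrlen' : rlen t' r = c + 1 := by
    have := getE_eq_none_iff.1 hterm1; omega
  have hrlt' : r < t'.length := by
    by_contra hcon
    have := rlen_of_ge (t := t') (i := r) (by omega)
    omega
  have hlen_eq : t.length = t'.length := length_congr e1.symm
  have hrlen : rlen t r = c + 1 := by rw [rlen_congr e1.symm]; exact hrlen'
  have hbt : rlen t (r+1) ≤ c := by rw [rlen_congr e1.symm]; exact hb'
  have hrtl : r < t.length := by omega
  have hc0len : c = 0 → r + 1 = t'.length := by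
    intro hc0
    rcases lt_or_ge (r+1) t'.length with hlt | hge
    · have := S'.rlen_pos hlt; omega
    · omega
  set u := t'.set r ((t'.getD r []).take c) with hu
  have hdelta : delta t = (u.filter (fun row => !row.isEmpty)).map (List.map (· - 1)) := by
    unfold delta
    rw [hs]
  have hflat_u : u.flatten = t'.flatten.eraseIdx (sizeT (t'.take r) + c) :=
    flat_shrink t' r c hrlen'
  have hperm_u : u.flatten.Perm (List.range' 2 (sizeT t - 1)) := by
    rcases e2.perm with ⟨h, hh, hperm⟩
    have hpos : t'.flatten[sizeT (t'.take r) + c]? = some h := by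
      rw [← flat_getE t' r c hole]; exact hh
    have h3 := perm_cons_eraseIdx hpos
    have h4 := (h3.symm.trans hperm).cons_inv
    rw [hflat_u]; exact h4
  have hulen : u.length = t'.length := List.length_set
  have hrowu : u[r]? = some ((t'.getD r []).take c) := by
    rw [List.getElem?_set_self (by omega)]
  have hgetu : ∀ p q, getE u p q = if p = r ∧ c ≤ q then none else getE t' p q := by
    intro p q
    by_cases hp : p = r
    · subst hp
      unfold getE
      rw [hrowu, List.getElem?_eq_getElem (show p < t'.length from hrlt')]
      simp only [Option.bind_some, List.getElem?_take]
      have hgd : t'.getD p [] = t'[p] := List.getD_eq_getElem _ _ hrlt'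
      by_cases hq : q < c
      · rw [if_pos hq, if_neg (by omega), hgd]
      · rw [if_neg hq, if_pos (by simp only [eq_self_iff_true, true_and]; omega)]
    · unfold getE
      rw [List.getElem?_set_ne (by omega)]
      rw [if_neg (by tauto)]
  have hrlenu : ∀ p, rlen u p = if p = r then c else rlen t' p := by
    intro p
    by_cases hp : p = r
    · subst hp
      rw [rlen_eq_getElem?, hrowu, if_pos rfl]
      simp only [Option.getD_some, List.length_take]
      rw [rlen] at hrlen'
      omega
    · rw [rlen_eq_getElem?, List.getElem?_set_ne (by omega), if_neg hp, rlen_eq_getElem?]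
  have hD : ∃ w : Tab, delta t = w.map (List.map (· - 1)) ∧
      (∀ p q, getE w p q = if p = r ∧ c ≤ q then none else getE t' p q) ∧
      (∀ p, rlen w p = if p = r then c else rlen t' p) ∧
      w.flatten = u.flatten ∧
      w.length = (if c = 0 then t.length - 1 else t.length) := by
    by_cases hc0 : c = 0
    · have hr1 : r + 1 = t'.length := hc0len hc0
      refine ⟨t'.take r, ?_, ?_, ?_, ?_, ?_⟩
      · rw [hdelta]
        congr 1
        have huexp : u = t'.take r ++ [[]] := by
          rw [hu, hc0, List.take_zero, List.set_eq_take_append_cons_drop, if_pos hrlt',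
            List.drop_of_length_le (by omega)]
        rw [huexp, List.filter_append]
        have h1 : (t'.take r).filter (fun row => !row.isEmpty) = t'.take r := by
          rw [List.filter_eq_self]
          intro a ha
          have := S'.pos a (List.mem_of_mem_take ha)
          simpa [List.isEmpty_iff]
        have h2 : ([[]] : Tab).filter (fun row => !row.isEmpty) = [] := by simp
        rw [h1, h2, List.append_nil]
      · intro p q
        unfold getE
        rw [List.getElem?_take]
        by_cases hp : p < r
        · rw [if_pos hp, if_neg (by omega)]
        · rw [if_neg hp]
          simp only [Option.bind_none]
          by_cases hpr : p = r
          · rw [if_pos (by exact ⟨hpr, by omega⟩)]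
          · rw [if_neg (by tauto), List.getElem?_eq_none (by omega)]
            simp
      · intro p
        rw [rlen_eq_getElem?, List.getElem?_take]
        by_cases hp : p < r
        · rw [if_pos hp, if_neg (by omega), rlen_eq_getElem?]
        · rw [if_neg hp]
          by_cases hpr : p = r
          · rw [if_pos hpr]
            simp [hc0]
          · rw [if_neg hpr, rlen_of_ge (show t'.length ≤ p by omega)]
            simp
      · have huexp : u = t'.take r ++ [[]] := by
          rw [hu, hc0, List.take_zero, List.set_eq_take_append_cons_drop, if_pos hrlt',
            List.drop_of_length_le (by omega)]
        rw [huexp, List.flatten_append]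
        simp
      · rw [List.length_take, if_pos hc0]
        omega
    · refine ⟨u, ?_, hgetu, hrlenu, rfl, ?_⟩
      · rw [hdelta]
        congr 1
        rw [List.filter_eq_self]
        intro a ha
        rcases List.mem_or_eq_of_mem_set ha with hmem | heq
        · have := S'.pos a hmem
          simpa [List.isEmpty_iff]
        · subst heq
          have hlen' : ((t'.getD r []).take c).length = c := by
            rw [List.length_take]
            rw [rlen] at hrlen'
            omega
          have : (t'.getD r []).take c ≠ [] := by
            intro hcon
            rw [hcon] at hlen'
            simp at hlen'
            omega
          simpa [List.isEmpty_iff]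
      · rw [if_neg hc0, hulen]
        omega
  obtain ⟨w, hw1, hw2, hw3, hw4, hw5⟩ := hD
  have hcell : ∀ p q, getE (delta t) p q =
      if p = r ∧ c ≤ q then none else (getE t' p q).map (· - 1) := by
    intro p q
    rw [hw1, getE_map, hw2]
    split <;> simp
  have hrlen_D : ∀ p, rlen (delta t) p = if p = r then c else rlen t' p := by
    intro p
    rw [hw1, rlen_map, hw3]
  have hlen_D : (delta t).length = (if c = 0 then t.length - 1 else t.length) := by
    rw [hw1, List.length_map, hw5]
  have hanti : ∀ p p', p ≤ p' → rlen (delta t) p' ≤ rlen (delta t) p := by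
    intro p p' hpp
    rw [hrlen_D, hrlen_D]
    by_cases h1 : p = r <;> by_cases h2 : p' = r
    · simp [h1, h2]
    · rw [if_pos h1, if_neg h2]
      have : r + 1 ≤ p' := by omega
      have := S'.rlen_anti this
      omega
    · rw [if_neg h1, if_pos h2]
      have := S'.rlen_anti (show p ≤ r by omega)
      omega
    · rw [if_neg h1, if_neg h2]
      exact S'.rlen_anti hpp
  have hflatD : (delta t).flatten = u.flatten.map (· - 1) := by
    rw [hw1, flatten_map_map, hw4]
  have hpermD : (delta t).flatten.Perm (List.range' 1 (sizeT t - 1)) := by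
    rw [hflatD]
    have := hperm_u.map (· - 1)
    rwa [range'_map_sub] at this
  have hsizeD : sizeT (delta t) = sizeT t - 1 := by
    rw [sizeT_eq_flatten_length, hpermD.length_eq, List.length_range']
  -- cells of delta t are ≥ 1 below shifted values; helper to destructure
  have hDsome : ∀ p q x, getE (delta t) p q = some x →
      ∃ v, getE t' p q = some v ∧ ¬(p = r ∧ c ≤ q) ∧ x = v - 1 ∧ 1 ≤ v := by
    intro p q x hx
    rw [hcell p q] at hx
    by_cases hcond : p = r ∧ c ≤ q
    · rw [if_pos hcond] at hx; cases hx
    · rw [if_neg hcond] at hx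
      rcases Option.map_eq_some_iff.1 hx with ⟨v, hv, hxv⟩
      exact ⟨v, hv, hcond, hxv.symm, e2.vals p q v hv⟩
  -- now assemble IsSYT
  have hlen_le : (delta t).length ≤ t'.length := by
    rw [hlen_D]
    split <;> omega
  refine ⟨⟨?_, ?_, ?_, ?_, ?_⟩, hsizeD, ?_, hrtl, hrlen, hbt, hcell, hlen_D⟩
  · -- rows nonempty
    intro row hrow
    rcases List.mem_iff_getElem.1 hrow with ⟨p, hp, hrow'⟩
    have hlenrow : row.length = rlen (delta t) p := by
      rw [← hrow', rlen_of_lt hp]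
    intro hcon
    rw [hcon] at hlenrow
    simp only [List.length_nil] at hlenrow
    rw [hrlen_D] at hlenrow
    by_cases hpr : p = r
    · rw [if_pos hpr] at hlenrow
      -- c = 0, so (delta t).length = t.length - 1 = r, contradiction with p = r < length
      have hr1 := hc0len hlenrow.symm
      rw [hlen_D, if_pos hlenrow.symm] at hp
      omega
    · rw [if_neg hpr] at hlenrow
      have : p < t'.length := by omega
      have := S'.rlen_pos this
      omega
  · -- sorted lengths
    rw [List.pairwise_map, List.pairwise_iff_getElem]
    intro p p' hp hp' hpp'
    show (delta t)[p'].length ≤ (delta t)[p].length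
    rw [← rlen_of_lt hp, ← rlen_of_lt hp']
    exact hanti p p' (by omega)
  · -- rows sorted
    intro row hrow
    rcases List.mem_iff_getElem.1 hrow with ⟨p, hp, hrow'⟩
    subst hrow'
    apply sorted_lt_of_adj
    intro q hq1 hq2 hq3
    have hv := getE_eq_getElem hp hq2
    have hw := getE_eq_getElem hp hq3
    rcases hDsome p q _ hv with ⟨v, hv', hc1, hx1, hv1⟩
    rcases hDsome p (q+1) _ hw with ⟨w', hw', hc2, hx2, hv2⟩
    have := e2.srow p q v w' hv' hw' (by omega) (by omega)
    omega
  · -- columns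
    intro i j hi1 hj
    have hj' : j < rlen (delta t) (i+1) := hj
    have hj2 : j < rlen (delta t) i := lt_of_lt_of_le hj' (hanti i (i+1) (by omega))
    rcases exists_getE_of_lt hj2 with ⟨x, hx⟩
    rcases exists_getE_of_lt hj' with ⟨y, hy⟩
    rw [getE_eq_getD hx, getE_eq_getD hy]
    rcases hDsome i j _ hx with ⟨v, hv', hc1, hx1, hv1⟩
    rcases hDsome (i+1) j _ hy with ⟨w', hw', hc2, hx2, hv2⟩
    have := e2.scol i j v w' hv' hw' (by omega) (by omega)
    omega
  · -- perm
    rw [hsizeD]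
    exact hpermD
  · -- diag
    have hdt : diagT t = diagT t' := diagT_congr e1.symm
    have hFr : ∑ j ∈ Finset.range (rlen t' r), ((j:ℤ) - r)
        = ∑ j ∈ Finset.range (rlen (delta t) r), ((j:ℤ) - r) + ((c:ℤ) - r) := by
      rw [hrlen_D, if_pos rfl, hrlen', Finset.sum_range_succ]
    by_cases hc0 : c = 0
    · have hr1 := hc0len hc0
      have hDlen : (delta t).length = r := by rw [hlen_D, if_pos hc0]; omega
      rw [hdt, diagT_finset, diagT_finset, hDlen, show t'.length = r + 1 by omega,
        Finset.sum_range_succ]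
      have hsum : ∑ i ∈ Finset.range r, ∑ j ∈ Finset.range (rlen t' i), ((j:ℤ) - i)
          = ∑ i ∈ Finset.range r, ∑ j ∈ Finset.range (rlen (delta t) i), ((j:ℤ) - i) := by
        apply Finset.sum_congr rfl
        intro i hi
        rw [hrlen_D, if_neg (by simp at hi; omega)]
      rw [hsum]
      have hgr : ∑ j ∈ Finset.range (rlen (delta t) r), ((j:ℤ) - r) = 0 := by
        rw [hrlen_D, if_pos rfl, hc0]
        simp
      have hFr' := hFr
      rw [hgr] at hFr'
      rw [hFr']
      ring
    · have hDlen : (delta t).length = t'.length := by rw [hlen_D, if_neg hc0]; omega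
      rw [hdt, diagT_finset, diagT_finset, hDlen, ← Finset.sum_sub_distrib]
      have hsum : ∀ i ∈ Finset.range t'.length,
          (∑ j ∈ Finset.range (rlen t' i), ((j:ℤ) - i))
            - (∑ j ∈ Finset.range (rlen (delta t) i), ((j:ℤ) - i))
          = if i = r then ((c:ℤ) - r) else 0 := by
        intro i _
        by_cases hi : i = r
        · subst hi
          rw [if_pos rfl, hFr]
          ring
        · rw [if_neg hi, hrlen_D, if_neg hi]
          ring
      rw [Finset.sum_congr rfl hsum, Finset.sum_ite_eq']
      rw [if_pos (by simp; omega)]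

end RSW
namespace RSW

theorem slide_j_le : ∀ (fuel : ℕ) (t : Tab) (i j : ℕ), j ≤ (slide fuel t i j).2.2 := by
  intro fuel
  induction fuel with
  | zero => intro t i j; exact le_refl _
  | succ fuel ih =>
    intro t i j
    rcases hR : getE t i (j+1) with _ | r <;> rcases hD : getE t (i+1) j with _ | d
    · simp [slide, hR, hD]
    · have hs : slide (fuel+1) t i j = slide fuel (setE t i j d) (i+1) j := by
        simp [slide, hR, hD]
      rw [hs]; exact ih _ _ _
    · have hs : slide (fuel+1) t i j = slide fuel (setE t i j r) i (j+1) := by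
        simp [slide, hR, hD]
      rw [hs]; exact le_trans (by omega) (ih (setE t i j r) i (j+1))
    · by_cases hc : r < d
      · have hs : slide (fuel+1) t i j = slide fuel (setE t i j r) i (j+1) := by
          simp [slide, hR, hD, hc]
        rw [hs]; exact le_trans (by omega) (ih (setE t i j r) i (j+1))
      · have hs : slide (fuel+1) t i j = slide fuel (setE t i j d) (i+1) j := by
          simp [slide, hR, hD, hc]
        rw [hs]; exact ih _ _ _

theorem slide_down_spec : ∀ (fuel : ℕ) (t : Tab) (i : ℕ), 0 < rlen t i →
    (slide fuel t i 0).2.2 = 0 →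
    i ≤ (slide fuel t i 0).2.1 ∧
    (∀ p q, ¬(q = 0 ∧ i ≤ p ∧ p ≤ (slide fuel t i 0).2.1) →
      getE (slide fuel t i 0).1 p q = getE t p q) ∧
    (∀ p, i ≤ p → p < (slide fuel t i 0).2.1 →
      getE (slide fuel t i 0).1 p 0 = getE t (p+1) 0) ∧
    (∀ p, i ≤ p → p < (slide fuel t i 0).2.1 →
      ∃ d, getE t (p+1) 0 = some d ∧ ∀ y, getE t p 1 = some y → ¬ y < d) := by
  intro fuel
  induction fuel with
  | zero =>
    intro t i h0 hj
    refine ⟨le_refl _, fun p q _ => rfl, ?_, ?_⟩ <;>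
      (intro p h1 h2; simp only [slide] at h2; omega)
  | succ fuel ih =>
    intro t i h0 hj
    rcases hR : getE t i 1 with _ | r <;> rcases hD : getE t (i+1) 0 with _ | d
    · have hs : slide (fuel+1) t i 0 = (t, i, 0) := by simp [slide, hR, hD]
      rw [hs]
      exact ⟨le_refl _, fun p q _ => rfl, fun p h1 h2 => by simp at h2; omega,
        fun p h1 h2 => by simp at h2; omega⟩
    · -- move down
      have hs : slide (fuel+1) t i 0 = slide fuel (setE t i 0 d) (i+1) 0 := by
        simp [slide, hR, hD]
      have h0' : 0 < rlen (setE t i 0 d) (i+1) := by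
        rw [rlen_congr (shapeT_setE)]
        exact lt_rlen_of_getE hD
      rw [hs] at hj ⊢
      obtain ⟨g1, g2, g3, g4⟩ := ih (setE t i 0 d) (i+1) h0' hj
      refine ⟨by omega, ?_, ?_, ?_⟩
      · intro p q hcond
        rw [g2 p q (by omega), getE_setE_ne (by omega)]
      · intro p hp1 hp2
        rcases eq_or_lt_of_le hp1 with rfl | hp'
        · rw [g2 i 0 (by omega), getE_setE_self h0]
          exact hD.symm
        · rw [g3 p (by omega) hp2, getE_setE_ne (by omega)]
      · intro p hp1 hp2
        rcases eq_or_lt_of_le hp1 with rfl | hp'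
        · exact ⟨d, hD, fun y hy => by rw [hR] at hy; cases hy⟩
        · rcases g4 p (by omega) hp2 with ⟨d', hd', hy'⟩
          rw [getE_setE_ne (by omega)] at hd'
          exact ⟨d', hd', fun y hy => hy' y (by rw [getE_setE_ne (by omega)]; exact hy)⟩
    · -- move right: impossible
      have hs : slide (fuel+1) t i 0 = slide fuel (setE t i 0 r) i 1 := by
        simp [slide, hR, hD]
      rw [hs] at hj
      have := slide_j_le fuel (setE t i 0 r) i 1
      omega
    · by_cases hc : r < d
      · have hs : slide (fuel+1) t i 0 = slide fuel (setE t i 0 r) i 1 := by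
          simp [slide, hR, hD, hc]
        rw [hs] at hj
        have := slide_j_le fuel (setE t i 0 r) i 1
        omega
      · have hs : slide (fuel+1) t i 0 = slide fuel (setE t i 0 d) (i+1) 0 := by
          simp [slide, hR, hD, hc]
        have h0' : 0 < rlen (setE t i 0 d) (i+1) := by
          rw [rlen_congr (shapeT_setE)]
          exact lt_rlen_of_getE hD
        rw [hs] at hj ⊢
        obtain ⟨g1, g2, g3, g4⟩ := ih (setE t i 0 d) (i+1) h0' hj
        refine ⟨by omega, ?_, ?_, ?_⟩
        · intro p q hcond
          rw [g2 p q (by omega), getE_setE_ne (by omega)]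
        · intro p hp1 hp2
          rcases eq_or_lt_of_le hp1 with rfl | hp'
          · rw [g2 i 0 (by omega), getE_setE_self h0]
            exact hD.symm
          · rw [g3 p (by omega) hp2, getE_setE_ne (by omega)]
        · intro p hp1 hp2
          rcases eq_or_lt_of_le hp1 with rfl | hp'
          · refine ⟨d, hD, fun y hy => ?_⟩
            rw [hR] at hy
            cases hy
            exact hc
          · rcases g4 p (by omega) hp2 with ⟨d', hd', hy'⟩
            rw [getE_setE_ne (by omega)] at hd'
            exact ⟨d', hd', fun y hy => hy' y (by rw [getE_setE_ne (by omega)]; exact hy)⟩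

theorem rowOf_eq {t : Tab} (hnd : t.flatten.Nodup) {p q v : ℕ} (h : getE t p q = some v) :
    rowOf t v = p := by
  have hp : p < t.length := lt_length_of_getE h
  have hq : q < t[p].length := by have := lt_rlen_of_getE h; rwa [rlen_of_lt hp] at this
  rw [getE_eq_getElem hp hq] at h
  have hvmem : v ∈ t[p] := by rw [← Option.some.inj h]; exact List.getElem_mem hq
  rw [List.nodup_flatten] at hnd
  apply (List.findIdx_eq hp).2
  constructor
  · simpa using hvmem
  · intro j hj
    simp only [decide_eq_false_iff_not]
    intro hmem
    have hdisj := (List.pairwise_iff_getElem.1 hnd.2) j p (by omega) hp hj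
    exact hdisj hmem hvmem

theorem find?_range'_eq_some {p : ℕ → Bool} : ∀ {m s a : ℕ},
    ((List.range' s m).find? p = some a ↔
      p a = true ∧ s ≤ a ∧ a < s + m ∧ ∀ b, s ≤ b → b < a → p b = false) := by
  intro m
  induction m with
  | zero =>
    intro s a
    simp only [List.range'_zero, List.find?_nil]
    constructor
    · intro h; cases h
    · intro ⟨_, h1, h2, _⟩; omega
  | succ m ih =>
    intro s a
    rw [List.range'_succ]
    rcases hp : p s with hf | ht
    · rw [List.find?_cons_of_neg (by simp [hp]), ih]
      constructor
      · rintro ⟨h1, h2, h3, h4⟩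
        refine ⟨h1, by omega, by omega, ?_⟩
        intro b hb1 hb2
        rcases eq_or_lt_of_le hb1 with rfl | hb'
        · exact hp
        · exact h4 b (by omega) hb2
      · rintro ⟨h1, h2, h3, h4⟩
        have hsa : s ≠ a := by
          intro he; rw [he] at hp; rw [hp] at h1; cases h1
        exact ⟨h1, by omega, by omega, fun b hb1 hb2 => h4 b (by omega) hb2⟩
    · rw [List.find?_cons_of_pos (by simp [hp])]
      constructor
      · intro h
        have : s = a := by simpa using h
        subst this
        exact ⟨hp, le_refl _, by omega, fun b hb1 hb2 => by omega⟩
      · rintro ⟨h1, h2, h3, h4⟩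
        rcases eq_or_lt_of_le h2 with rfl | h2'
        · rfl
        · have := h4 s (le_refl _) h2'
          rw [this] at hp; cases hp

theorem range_map_add_one (n : ℕ) : (List.range n).map (· + 1) = List.range' 1 n := by
  rw [List.range_eq_range']
  have := List.map_add_range' (a := 1) 0 n 1
  simpa [Nat.add_comm] using this

theorem col0_chain {t : Tab} (ht : IsSYT t) : ∀ (k p : ℕ) {u w : ℕ},
    getE t p 0 = some u → getE t (p + k + 1) 0 = some w → u < w := by
  intro k
  induction k with
  | zero => intro p u w hu hw; exact syt_scol ht hu (by simpa using hw)
  | succ k ih =>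
    intro p u w hu hw
    have hlen : p + k + 1 < t.length := by
      have := lt_length_of_getE hw
      omega
    rcases exists_getE_of_lt ((syt_shapeOK ht).rlen_pos hlen) with ⟨x, hx⟩
    exact lt_trans (ih p hu hx) (syt_scol ht hx (by
      have : p + k + 1 + 1 = p + (k + 1) + 1 := by omega
      rw [this]; exact hw))

theorem col0_lt {t : Tab} (ht : IsSYT t) {p p' u w : ℕ} (hpp : p < p')
    (hu : getE t p 0 = some u) (hw : getE t p' 0 = some w) : u < w := by
  have : p' = p + (p' - p - 1) + 1 := by omega
  rw [this] at hw
  exact col0_chain ht _ p hu hw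

theorem row_chain {t : Tab} (ht : IsSYT t) : ∀ (k : ℕ) {p q u w : ℕ},
    getE t p q = some u → getE t p (q + k + 1) = some w → u < w := by
  intro k
  induction k with
  | zero => intro p q u w hu hw; exact syt_srow ht hu (by simpa using hw)
  | succ k ih =>
    intro p q u w hu hw
    have hlen : q + k + 1 < rlen t p := by
      have := lt_rlen_of_getE hw
      omega
    rcases exists_getE_of_lt hlen with ⟨x, hx⟩
    exact lt_trans (ih hu hx) (syt_srow ht hx (by
      have : q + k + 1 + 1 = q + (k + 1) + 1 := by omega
      rw [this]; exact hw))

theorem row_lt {t : Tab} (ht : IsSYT t) {p q q' u w : ℕ} (hqq : q < q')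
    (hu : getE t p q = some u) (hw : getE t p q' = some w) : u < w := by
  have : q' = q + (q' - q - 1) + 1 := by omega
  rw [this] at hw
  exact row_chain ht _ hu hw

/-- If `1,…,a` have strictly increasing row indices then they sit in the
first column. -/
theorem col_struct {t : Tab} (ht : IsSYT t) {a : ℕ} (han : a ≤ sizeT t)
    (hasc : ∀ i, 1 ≤ i → i < a → ¬(i = sizeT t ∨ rowOf t (i+1) ≤ rowOf t i)) :
    ∀ i, 1 ≤ i → i ≤ a → getE t (i-1) 0 = some i := by
  intro i
  induction i using Nat.strong_induction_on with
  | _ i IH =>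
    intro h1 hia
    have hne : t ≠ [] := by
      intro hc
      subst hc
      have : sizeT ([] : Tab) = 0 := rfl
      omega
    rcases eq_or_lt_of_le h1 with rfl | hi2
    · simpa using syt_corner ht hne
    -- i ≥ 2; let i' := i - 1
    have hi' : 1 ≤ i - 1 := by omega
    have hprev : getE t (i - 1 - 1) 0 = some (i - 1) := IH (i-1) (by omega) hi' (by omega)
    -- the cell of value i
    have himem : i ∈ t.flatten := by
      rw [(syt_perm ht).mem_iff, List.mem_range']
      exact ⟨i - 1, by omega, by omega⟩
    rcases mem_flatten_getE himem with ⟨ρ, κ, hcell⟩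
    have hrowOf_i : rowOf t i = ρ := rowOf_eq (syt_nodup ht) hcell
    have hrowOf_i' : rowOf t (i-1) = i - 1 - 1 := rowOf_eq (syt_nodup ht) hprev
    have hstep := hasc (i-1) hi' (by omega)
    push_neg at hstep
    have hρ : i - 1 ≤ ρ := by
      have := hstep.2
      rw [show i - 1 + 1 = i by omega, hrowOf_i, hrowOf_i'] at this
      omega
    have hκ : κ = 0 := by
      by_contra hκne
      have hρlen : ρ < t.length := lt_length_of_getE hcell
      rcases exists_getE_of_lt ((syt_shapeOK ht).rlen_pos hρlen) with ⟨x, hx⟩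
      have hx1 : i - 1 < x := col0_lt ht (by omega) hprev hx
      have hx2 : x < i := row_lt ht (by omega) hx hcell
      omega
    subst hκ
    have hρeq : ρ = i - 1 := by
      by_contra hρne
      have hρ2 : i - 1 < ρ := by omega
      have hρlen : ρ - 1 < t.length := by
        have := lt_length_of_getE hcell
        omega
      rcases exists_getE_of_lt ((syt_shapeOK ht).rlen_pos hρlen) with ⟨y, hy⟩
      have hy1 : i - 1 < y := by
        rcases eq_or_lt_of_le (show i - 1 - 1 ≤ ρ - 1 by omega) with he | hlt
        · rw [← he] at hy
          rw [hy] at hprev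
          cases hprev
          omega
        · exact col0_lt ht hlt hprev hy
      have hy2 : y < i := by
        have : ρ = ρ - 1 + 1 := by omega
        rw [this] at hcell
        exact syt_scol ht hy hcell
      omega
    rw [← hρeq]
    exact hcell

end RSW
namespace RSW

theorem syt_empty {x : Tab} (hx : IsSYT x) (h0 : sizeT x = 0) : x = [] := by
  have := length_le_sizeT (syt_shapeOK hx)
  rw [h0] at this
  exact List.length_eq_zero_iff.1 (by omega)

theorem odd_sub_one_even {a : ℕ} (h : ¬ Even a) (h1 : 1 ≤ a) : Even (a - 1) := by
  rw [Nat.not_even_iff] at h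
  rw [Nat.even_iff]
  omega

/-- If `t` is a non-desarrangement SYT and the jeu-de-taquin hole exits in
column `0`, then `Δ t` is a desarrangement tableau. -/
theorem claimC {t t' : Tab} {r : ℕ} (ht : IsSYT t) (hnd : ¬ IsDes t)
    (hs : slide (sizeT t) t 0 0 = (t', r, 0)) : IsDes (delta t) := by
  have hne : t ≠ [] := fun hc => hnd (Or.inl hc)
  have hn1 : 1 ≤ sizeT t := syt_size_pos ht hne
  obtain ⟨htD, hsize, hdiag, hrtl, hrlen1, hbt, hcell, hlenD⟩ := delta_master ht hne hs
  by_cases hn2 : sizeT t = 1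
  · left
    exact syt_empty htD (by omega)
  have hr1 : r + 1 = t.length := by
    rcases lt_or_ge (r+1) t.length with hlt | hge
    · have := (syt_shapeOK ht).rlen_pos hlt
      omega
    · omega
  -- the first ascent of t
  have hfa : ∃ a, firstAscent t = some a := by
    cases hfa0 : firstAscent t with
    | some a => exact ⟨a, rfl⟩
    | none =>
      exfalso
      unfold firstAscent at hfa0
      rw [range_map_add_one] at hfa0
      have hmem : sizeT t ∈ List.range' 1 (sizeT t) := by
        rw [List.mem_range']
        exact ⟨sizeT t - 1, by omega, by omega⟩
      have := List.find?_eq_none.1 hfa0 _ hmem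
      simp at this
  obtain ⟨a, hfa⟩ := hfa
  have hfa' := hfa
  unfold firstAscent at hfa'
  rw [range_map_add_one, find?_range'_eq_some] at hfa'
  obtain ⟨hpa, ha1, ha2, hmin⟩ := hfa'
  have hpa' : a = sizeT t ∨ rowOf t (a+1) ≤ rowOf t a := by simpa using hpa
  have hodd : ¬ Even a := fun hev => hnd (Or.inr ⟨a, hfa, hev⟩)
  have hasc : ∀ i, 1 ≤ i → i < a → ¬(i = sizeT t ∨ rowOf t (i+1) ≤ rowOf t i) := by
    intro i h1 h2
    have := hmin i h1 h2
    simpa using this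
  have hcol := col_struct ht (by omega) hasc
  have haR : a ≤ r + 1 := by
    have := lt_length_of_getE (hcol a (by omega) (le_refl _))
    omega
  obtain ⟨g1, g2, g3, g4⟩ := slide_down_spec (sizeT t) t 0
    (lt_rlen_of_getE (syt_corner ht hne)) (by rw [hs])
  rw [hs] at g1 g2 g3 g4
  simp only at g1 g2 g3 g4
  have hDrow0 : ∀ w, 1 ≤ w → w ≤ a - 1 → getE (delta t) (w-1) 0 = some w := by
    intro w h1 h2
    have hcw := hcol (w+1) (by omega) (by omega)
    rw [show w + 1 - 1 = w by omega] at hcw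
    rw [hcell, if_neg (by omega), g3 (w-1) (by omega) (by omega),
      show w - 1 + 1 = w by omega, hcw]
    simp
  have hrowOfD : ∀ w, 1 ≤ w → w ≤ a - 1 → rowOf (delta t) w = w - 1 := fun w h1 h2 =>
    rowOf_eq (syt_nodup htD) (hDrow0 w h1 h2)
  have hkey : 2 ≤ a ∧ (a - 1 = sizeT (delta t) ∨
      (a ≤ sizeT t - 1 ∧ ∃ ρ, rowOf (delta t) a = ρ ∧ ρ + 2 ≤ a)) := by
    by_cases hAn : a = sizeT t
    · exact ⟨by omega, Or.inl (by omega)⟩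
    · have hB : rowOf t (a+1) ≤ rowOf t a := hpa'.resolve_left hAn
      have hmem : a + 1 ∈ t.flatten := by
        rw [(syt_perm ht).mem_iff, List.mem_range']
        exact ⟨a, by omega, by omega⟩
      obtain ⟨ρ, κ, hcell2⟩ := mem_flatten_getE hmem
      have h1 := rowOf_eq (syt_nodup ht) hcell2
      have h2 := rowOf_eq (syt_nodup ht) (hcol a (by omega) (le_refl _))
      have hρa : ρ ≤ a - 1 := by omega
      have hκ : 1 ≤ κ := by
        by_contra hcon
        have hκ0 : κ = 0 := by omega
        rw [hκ0] at hcell2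
        have hcol' := hcol (ρ+1) (by omega) (by omega)
        rw [show ρ + 1 - 1 = ρ by omega] at hcol'
        rw [hcol'] at hcell2
        simp at hcell2
        omega
      have hρ2 : ρ + 2 ≤ a := by
        by_contra hcon
        have hρeq : ρ = a - 1 := by omega
        have hcola := hcol a (by omega) (le_refl _)
        obtain ⟨y, hy⟩ := exists_getE_of_lt
          (show 1 < rlen t ρ from by have := lt_rlen_of_getE hcell2; omega)
        have hya : a < y := by
          apply row_lt ht (show (0:ℕ) < 1 by omega) _ hy
          rw [hρeq]
          exact hcola
        have hyeq : y = a + 1 := by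
          rcases eq_or_lt_of_le hκ with he | hκ2
          · rw [← he] at hcell2
            rw [hy] at hcell2
            simpa using hcell2
          · have := row_lt ht (show 1 < κ from hκ2) hy hcell2
            omega
        rcases lt_or_ge ρ r with hlt | hge
        · obtain ⟨d, hd, hyc⟩ := g4 ρ (by omega) hlt
          have had : a < d := by
            apply syt_scol ht _ hd
            rw [hρeq]
            exact hcola
          have hnlt := hyc y hy
          have hdne : d ≠ a + 1 := by
            intro he
            rw [he] at hd
            rw [hyeq] at hy
            have := syt_inj ht hd hy
            omega
          omega
        · have hρr : ρ = r := by omega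
          have := lt_rlen_of_getE hy
          rw [hρr] at this
          omega
      have hDa : getE (delta t) ρ κ = some a := by
        rw [hcell, if_neg (by omega), g2 ρ κ (by omega), hcell2]
        simp
      exact ⟨by omega, Or.inr ⟨by omega, ρ, rowOf_eq (syt_nodup htD) hDa, hρ2⟩⟩
  obtain ⟨ha2', hcase⟩ := hkey
  have ham : a - 1 ≤ sizeT (delta t) := by
    rcases hcase with h | ⟨h, _⟩ <;> omega
  right
  refine ⟨a - 1, ?_, odd_sub_one_even hodd (by omega)⟩
  unfold firstAscent
  rw [range_map_add_one, find?_range'_eq_some]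
  refine ⟨?_, by omega, by omega, ?_⟩
  · rw [decide_eq_true_iff]
    rcases hcase with h | ⟨haa, ρ, hρ, hρ2⟩
    · exact Or.inl h
    · right
      have h1 : rowOf (delta t) (a-1) = a - 1 - 1 := hrowOfD (a-1) (by omega) (le_refl _)
      rw [show a - 1 + 1 = a by omega, hρ, h1]
      omega
  · intro b hb1 hb2
    have h1 := hrowOfD b hb1 (by omega)
    have h2 := hrowOfD (b+1) (by omega) (by omega)
    simp only [decide_eq_false_iff_not]
    intro hcon
    rcases hcon with h | h
    · omega
    · rw [h1, h2] at h
      omega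

end RSW
namespace RSW

theorem delta_nil : delta ([] : Tab) = [] := rfl

theorem delta_facts {t : Tab} (ht : IsSYT t) (hne : t ≠ []) :
    IsSYT (delta t) ∧ sizeT (delta t) = sizeT t - 1 := by
  rcases hsl : slide (sizeT t) t 0 0 with ⟨t', r, c⟩
  obtain ⟨h1, h2, _⟩ := delta_master ht hne hsl
  exact ⟨h1, h2⟩

theorem des_iterate : ∀ (m : ℕ) (t : Tab), IsSYT t → sizeT t ≤ m → IsDes (delta^[m] t) := by
  intro m
  induction m with
  | zero =>
    intro t ht h0
    have : t = [] := syt_empty ht (by omega)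
    subst this
    exact Or.inl rfl
  | succ m ih =>
    intro t ht h0
    by_cases hne : t = []
    · subst hne
      rw [Function.iterate_fixed delta_nil]
      exact Or.inl rfl
    · rw [Function.iterate_succ_apply]
      obtain ⟨h1, h2⟩ := delta_facts ht hne
      exact ih (delta t) h1 (by omega)

theorem typeS_nonempty {t : Tab} (ht : IsSYT t) : {j | IsDes (delta^[j] t)}.Nonempty :=
  ⟨sizeT t, des_iterate _ t ht le_rfl⟩

theorem not_des_of_type_pos {t : Tab} (h : 0 < typeT t) : ¬ IsDes t := by
  intro hd
  have : typeT t ≤ 0 := Nat.sInf_le (show (0:ℕ) ∈ {j | IsDes (delta^[j] t)} from hd)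
  omega

theorem type_pos_of_not_des {t : Tab} (ht : IsSYT t) (h : ¬ IsDes t) : 0 < typeT t := by
  rcases Nat.eq_zero_or_pos (typeT t) with h0 | h1
  · exfalso
    rcases Nat.sInf_eq_zero.1 h0 with hmem | hempty
    · exact h hmem
    · exact absurd hempty (Set.nonempty_iff_ne_empty.1 (typeS_nonempty ht))
  · exact h1

theorem typeT_delta {t : Tab} (ht : IsSYT t) (h : ¬ IsDes t) :
    typeT (delta t) = typeT t - 1 := by
  have hpos := type_pos_of_not_des ht h
  have hmem : typeT t ∈ {j | IsDes (delta^[j] t)} := Nat.sInf_mem (typeS_nonempty ht)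
  have hmem' : (typeT t - 1) ∈ {j | IsDes (delta^[j] (delta t))} := by
    show IsDes (delta^[typeT t - 1] (delta t))
    rw [← Function.iterate_succ_apply, Nat.succ_eq_add_one,
      show typeT t - 1 + 1 = typeT t by omega]
    exact hmem
  apply le_antisymm
  · exact Nat.sInf_le hmem'
  · by_contra hcon
    push_neg at hcon
    have hne' : {j | IsDes (delta^[j] (delta t))}.Nonempty := ⟨_, hmem'⟩
    have hq := Nat.sInf_mem hne'
    set q := sInf {j | IsDes (delta^[j] (delta t))}
    have : IsDes (delta^[q+1] t) := by
      rw [Function.iterate_succ_apply]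
      exact hq
    have hle := Nat.sInf_le (show (q+1) ∈ {j | IsDes (delta^[j] t)} from this)
    have he1 : typeT t = sInf {j | IsDes (delta^[j] t)} := rfl
    have he2 : typeT (delta t) = q := rfl
    omega

/-- Lemma R : the type is at most `n - #rows + 1`. -/
theorem lemmaR : ∀ (n : ℕ) (t : Tab), sizeT t ≤ n → IsSYT t → ¬ IsDes t →
    typeT t ≤ sizeT t - t.length + 1 := by
  intro n
  induction n with
  | zero =>
    intro t h0 ht hnd
    exact absurd (Or.inl (syt_empty ht (by omega))) hnd
  | succ n ih =>
    intro t h0 ht hnd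
    have hne : t ≠ [] := fun hc => hnd (Or.inl hc)
    rcases hsl : slide (sizeT t) t 0 0 with ⟨t', r, c⟩
    obtain ⟨htD, hsizeD, hdiag, hrtl, hrlen, hbt, hcell, hlenD⟩ := delta_master ht hne hsl
    have hs1 : 1 ≤ sizeT t := syt_size_pos ht hne
    have hRle : t.length ≤ sizeT t := length_le_sizeT (syt_shapeOK ht)
    by_cases hdd : IsDes (delta t)
    · have : typeT t ≤ 1 := by
        apply Nat.sInf_le
        show IsDes (delta^[1] t)
        simpa using hdd
      omega
    · have h1 := typeT_delta ht hnd
      have h2 := ih (delta t) (by omega) htD hdd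
      have hc0 : c ≠ 0 := by
        intro hc
        subst hc
        exact hdd (claimC ht hnd hsl)
      have hlen : (delta t).length = t.length := by rw [hlenD, if_neg hc0]
      have htype_pos := type_pos_of_not_des ht hnd
      have hDlen_le : (delta t).length ≤ sizeT (delta t) := length_le_sizeT (syt_shapeOK htD)
      omega

theorem vAux_zero : ∀ (f : ℕ) (t : Tab), vAux f 0 t = 1 := by
  intro f t
  cases f <;> rfl

theorem vAux_succ (m k : ℕ) (t : Tab) : vAux (m+1) (k+1) t =
    if typeT t < k+1 then 0
    else vAux m (k+1) (delta t) +
      ((sizeT t : ℤ) + 1 - (k+1)) * vAux m k (delta t) + diagBox t * vAux m k (delta t) := by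
  rw [vAux]
  split
  · rfl
  · ring

theorem v_eq_zero {t : Tab} {k : ℕ} (hk : 1 ≤ k) (h : typeT t < k) : v k t = 0 := by
  obtain ⟨k', rfl⟩ : ∃ k', k = k' + 1 := ⟨k - 1, by omega⟩
  unfold v
  rcases hn : sizeT t with _ | m
  · rfl
  · rw [vAux_succ, if_pos h]

theorem main_pos : ∀ (n : ℕ) (t : Tab) (k : ℕ), sizeT t ≤ n → IsSYT t → 1 ≤ k →
    k ≤ typeT t → 0 < v k t := by
  intro n
  induction n with
  | zero =>
    intro t k h0 ht hk htype
    have hte : t = [] := syt_empty ht (by omega)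
    subst hte
    have : typeT ([] : Tab) = 0 := by
      have : typeT ([] : Tab) ≤ 0 := Nat.sInf_le (Or.inl rfl)
      omega
    omega
  | succ n ih =>
    intro t k h0 ht hk htype
    have hnd : ¬ IsDes t := not_des_of_type_pos (by omega)
    have hne : t ≠ [] := fun hc => hnd (Or.inl hc)
    have hs1 : 1 ≤ sizeT t := syt_size_pos ht hne
    rcases hsl : slide (sizeT t) t 0 0 with ⟨t', r, c⟩
    obtain ⟨htD, hsizeD, hdiag, hrtl, hrlen, hbt, hcell, hlenD⟩ := delta_master ht hne hsl
    obtain ⟨k', rfl⟩ : ∃ k', k = k' + 1 := ⟨k - 1, by omega⟩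
    obtain ⟨m, hm⟩ : ∃ m, sizeT t = m + 1 := ⟨sizeT t - 1, by omega⟩
    have hmD : m = sizeT (delta t) := by omega
    have hv : v (k'+1) t = vAux m (k'+1) (delta t) +
        ((sizeT t : ℤ) + 1 - (k'+1)) * vAux m k' (delta t)
          + diagBox t * vAux m k' (delta t) := by
      unfold v
      conv_lhs => rw [hm]
      rw [vAux_succ, if_neg (by omega)]
    have hvA : vAux m (k'+1) (delta t) = v (k'+1) (delta t) := by
      unfold v
      rw [← hmD]
    have hvB : vAux m k' (delta t) = v k' (delta t) := by
      unfold v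
      rw [← hmD]
    have hLR := lemmaR (sizeT t) t le_rfl ht hnd
    have hdiagBox : diagBox t = (c:ℤ) - r := hdiag
    have hRn : t.length ≤ sizeT t := length_le_sizeT (syt_shapeOK ht)
    have hcoef : 0 < (sizeT t : ℤ) + 1 - (k'+1) + diagBox t := by
      rw [hdiagBox]
      have hc0 : (0:ℤ) ≤ (c:ℤ) := by positivity
      omega
    have hB : 0 < vAux m k' (delta t) := by
      rcases Nat.eq_zero_or_pos k' with rfl | hk'
      · rw [vAux_zero]
        norm_num
      · rw [hvB]
        apply ih (delta t) k' (by omega) htD hk'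
        rw [typeT_delta ht hnd]
        omega
    have hA : 0 ≤ vAux m (k'+1) (delta t) := by
      rw [hvA]
      rcases lt_or_ge (typeT (delta t)) (k'+1) with hlt | hge
      · rw [v_eq_zero (by omega) hlt]
      · exact le_of_lt (ih (delta t) (k'+1) (by omega) htD (by omega) hge)
    rw [hv]
    have hprod : 0 < ((sizeT t : ℤ) + 1 - (k'+1) + diagBox t) * vAux m k' (delta t) :=
      mul_pos hcoef hB
    nlinarith [hprod, hA, hB]

end RSW


open RSW

/-- For every standard tableau of type at least `k ≥ 1`, the eigenvalue
`v_k(t)` is a positive integer. -/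
theorem v_pos (t : Tab) (ht : IsSYT t) (k : ℕ) (hk : 1 ≤ k)
    (htype : k ≤ typeT t) : 0 < v k t :=
  RSW.main_pos (sizeT t) t k le_rfl ht hk htype
end
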